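/- arXiv:1109.1790 — 4 statements merged into one kernel-verified Lean document; each statement's English description precedes it below -/
import Mathlib

section
/- (Routh–Hurwitz criterion) Let p(z) = b₀zⁿ + b₁z^{n−1} + ⋯ + b_{n−1}z + b_n be a polynomial of degree n ≥ 1 with real coefficients and positive leading coefficient b₀ > 0. Then every complex root of p has negative real part if and only if all the Hurwitz determinants of p are positive: Δ_k > 0 for every k = 1, …, n. -/
/-- The `k`-th Hurwitz determinant of a real polynomial `p` of degree `n`:
the determinant of the `k × k` matrix whose `(i, j)` entry (1-based indices)
is `b_{2j - i}`, where `b_m` is the coefficient of `z^(n - m)` in `p`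
(with the convention `b_m = 0` for `m < 0` or `m > n`). -/
noncomputable def hurwitzDet (p : Polynomial ℝ) (k : ℕ) : ℝ :=
  Matrix.det (Matrix.of fun i j : Fin k =>
    if 0 ≤ 2 * (j : ℤ) - (i : ℤ) + 1 ∧ 2 * (j : ℤ) - (i : ℤ) + 1 ≤ (p.natDegree : ℤ)
    then p.coeff (p.natDegree - (2 * (j : ℤ) - (i : ℤ) + 1).toNat)
    else 0)

namespace RH

open Complex Polynomial

local notation "conj'" => starRingEnd ℂ

noncomputable def cZ (f : ℝ[X]) (j : ℤ) : ℝ := if 0 ≤ j then f.coeff j.toNat else 0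

lemma cZ_coe (f : ℝ[X]) (k : ℕ) : cZ f k = f.coeff k := by simp [cZ]

lemma cZ_neg (f : ℝ[X]) {j : ℤ} (h : j < 0) : cZ f j = 0 := by
  simp [cZ, not_le.2 h]

lemma cZ_gt (f : ℝ[X]) {j : ℤ} (h : (f.natDegree : ℤ) < j) : cZ f j = 0 := by
  have h0 : 0 ≤ j := le_of_lt (lt_of_le_of_lt (Int.ofNat_nonneg _) h)
  have : f.natDegree < j.toNat := by omega
  simp [cZ, h0, Polynomial.coeff_eq_zero_of_natDegree_lt this]

noncomputable def bZ (f : ℝ[X]) (m : ℤ) : ℝ := cZ f ((f.natDegree : ℤ) - m)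

lemma hurwitzDet_eq (p : ℝ[X]) (k : ℕ) :
    hurwitzDet p k = Matrix.det (Matrix.of fun i j : Fin k => bZ p (2 * (j : ℤ) - (i : ℤ) + 1)) := by
  unfold hurwitzDet
  congr 1
  ext i j
  set M : ℤ := 2 * (j : ℤ) - (i : ℤ) + 1 with hM
  simp only [Matrix.of_apply]
  by_cases h0 : 0 ≤ M
  · by_cases hn : M ≤ (p.natDegree : ℤ)
    · rw [if_pos ⟨h0, hn⟩]
      unfold bZ cZ
      rw [if_pos (by omega)]
      congr 1
      omega
    · rw [if_neg (by tauto), bZ, cZ_neg p (by omega)]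
  · rw [if_neg (by tauto), bZ, cZ_gt p (by omega)]

/-- the parity part of `p` opposite to the leading coefficient -/
noncomputable def Opart (p : ℝ[X]) : ℝ[X] :=
  ∑ i ∈ Finset.range (p.natDegree + 1), if Odd (p.natDegree + i) then C (p.coeff i) * X ^ i else 0

lemma coeff_Opart (p : ℝ[X]) (j : ℕ) :
    (Opart p).coeff j = if Odd (p.natDegree + j) then p.coeff j else 0 := by
  unfold Opart
  rw [finset_sum_coeff]
  have h : ∀ i ∈ Finset.range (p.natDegree + 1),
      (if Odd (p.natDegree + i) then C (p.coeff i) * X ^ i else 0).coeff j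
        = if i = j then (if Odd (p.natDegree + j) then p.coeff j else 0) else 0 := by
    intro i _
    by_cases hij : i = j
    · subst hij
      by_cases hpar : Odd (p.natDegree + i) <;> simp [hpar, coeff_C_mul, coeff_X_pow]
    · by_cases hpar : Odd (p.natDegree + i) <;>
        simp [hpar, coeff_C_mul, coeff_X_pow, hij, Ne.symm hij]
  rw [Finset.sum_congr rfl h, Finset.sum_ite_eq' (Finset.range (p.natDegree + 1))]
  by_cases hj : j ∈ Finset.range (p.natDegree + 1)
  · rw [if_pos hj]
  · rw [if_neg hj]
    have : p.natDegree < j := by simpa using hj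
    rw [Polynomial.coeff_eq_zero_of_natDegree_lt this, ite_self]

/-- evaluation bridge -/
lemma aeval_eq_eval_map (p : ℝ[X]) (z : ℂ) :
    (Polynomial.aeval z p : ℂ) = (p.map (algebraMap ℝ ℂ)).eval z := by
  rw [Polynomial.aeval_def, Polynomial.eval_map]

/-- parity evaluation -/
lemma aeval_neg_of_parity (f : ℝ[X]) (d : ℕ)
    (hf : ∀ j : ℕ, ¬ Even (d + j) → f.coeff j = 0) (z : ℂ) :
    (Polynomial.aeval (-z) f : ℂ) = (-1) ^ d * Polynomial.aeval z f := by
  rw [Polynomial.aeval_def, Polynomial.aeval_def,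
    Polynomial.eval₂_eq_sum_range, Polynomial.eval₂_eq_sum_range, Finset.mul_sum]
  refine Finset.sum_congr rfl ?_
  intro i _
  by_cases hc : f.coeff i = 0
  · simp [hc]
  · have hpar : Even (d + i) := by
      by_contra hh; exact hc (hf i hh)
    have h1 : ((-1 : ℂ)) ^ (d + i) = 1 := hpar.neg_one_pow
    rw [pow_add] at h1
    have h2 : ((-1 : ℂ)) ^ i = (-1) ^ d := by
      have hd : ((-1 : ℂ)) ^ d * ((-1 : ℂ)) ^ d = 1 := by
        rw [← pow_add]; exact (Even.add_self d).neg_one_pow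
      calc ((-1 : ℂ)) ^ i = ((-1 : ℂ)) ^ d * (((-1 : ℂ)) ^ d * ((-1 : ℂ)) ^ i) := by
            rw [← mul_assoc, hd, one_mul]
        _ = (-1) ^ d := by rw [h1, mul_one]
    rw [neg_pow z i, ← mul_assoc, mul_comm ((-1:ℂ)^d) _, h2]
    ring

lemma abs_lt_abs_of_re {z r : ℂ} (hz : 0 < z.re) (hr : r.re < 0) :
    ‖(conj' z) + r‖ < ‖z - r‖ := by
  have h : Complex.normSq ((conj' z) + r) < Complex.normSq (z - r) := by
    simp only [Complex.normSq_apply, Complex.add_re, Complex.add_im, Complex.sub_re,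
      Complex.sub_im, Complex.conj_re, Complex.conj_im]
    nlinarith [sq_nonneg (z.im + r.im)]
  have := Real.sqrt_lt_sqrt (Complex.normSq_nonneg _) h
  simpa [Complex.norm_def] using this

lemma prod_abs_le (z : ℂ) (hz : 0 < z.re) (s : Multiset ℂ) (hs : ∀ r ∈ s, r.re < 0) :
    0 < (s.map fun r => ‖z - r‖).prod ∧
      (s.map fun r => ‖(conj' z) + r‖).prod ≤
        (s.map fun r => ‖z - r‖).prod := by
  induction s using Multiset.induction with
  | empty => simp
  | cons a t ih =>
    have ha : a.re < 0 := hs a (Multiset.mem_cons_self a t)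
    have ht : ∀ r ∈ t, r.re < 0 := fun r hr => hs r (Multiset.mem_cons_of_mem hr)
    obtain ⟨hpos, hle⟩ := ih ht
    have hlt : ‖(conj' z) + a‖ < ‖z - a‖ := abs_lt_abs_of_re hz ha
    constructor
    · rw [Multiset.map_cons, Multiset.prod_cons]
      exact mul_pos (lt_of_le_of_lt (norm_nonneg _) hlt) hpos
    · rw [Multiset.map_cons, Multiset.prod_cons, Multiset.map_cons, Multiset.prod_cons]
      calc ‖(conj' z) + a‖ * (t.map fun r => ‖(conj' z) + r‖).prod
          ≤ ‖(conj' z) + a‖ * (t.map fun r => ‖z - r‖).prod :=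
            mul_le_mul_of_nonneg_left hle (norm_nonneg _)
        _ ≤ ‖z - a‖ * (t.map fun r => ‖z - r‖).prod :=
            mul_le_mul_of_nonneg_right (le_of_lt hlt) (le_of_lt hpos)

lemma prod_abs_lt (z : ℂ) (hz : 0 < z.re) (s : Multiset ℂ) (hs : ∀ r ∈ s, r.re < 0)
    (hcard : 0 < Multiset.card s) :
    (s.map fun r => ‖(conj' z) + r‖).prod <
      (s.map fun r => ‖z - r‖).prod := by
  obtain ⟨a, ha⟩ := Multiset.card_pos_iff_exists_mem.1 hcard
  obtain ⟨t, rfl⟩ : ∃ t, s = a ::ₘ t := ⟨s.erase a, (Multiset.cons_erase ha).symm⟩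
  have ha' : a.re < 0 := hs a (Multiset.mem_cons_self a t)
  have ht : ∀ r ∈ t, r.re < 0 := fun r hr => hs r (Multiset.mem_cons_of_mem hr)
  obtain ⟨hpos, hle⟩ := prod_abs_le z hz t ht
  have hlt : ‖(conj' z) + a‖ < ‖z - a‖ := abs_lt_abs_of_re hz ha'
  rw [Multiset.map_cons, Multiset.prod_cons, Multiset.map_cons, Multiset.prod_cons]
  calc ‖(conj' z) + a‖ * (t.map fun r => ‖(conj' z) + r‖).prod
      ≤ ‖(conj' z) + a‖ * (t.map fun r => ‖z - r‖).prod :=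
        mul_le_mul_of_nonneg_left hle (norm_nonneg _)
    _ < ‖z - a‖ * (t.map fun r => ‖z - r‖).prod :=
        mul_lt_mul_of_pos_right hlt hpos

end RH

namespace RH
open Complex Polynomial
local notation "conj'" => starRingEnd ℂ

lemma abs_aeval_eq_prod (f : ℝ[X]) (z : ℂ) :
    ‖Polynomial.aeval z f‖ =
      ‖(f.map (algebraMap ℝ ℂ)).leadingCoeff‖ *
        (((f.map (algebraMap ℝ ℂ)).roots).map fun r => ‖z - r‖).prod := by
  set F := f.map (algebraMap ℝ ℂ) with hF
  have hsplit : F.Splits := IsAlgClosed.splits F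
  have hfac := hsplit.eq_prod_roots
  have hev : (Polynomial.aeval z f : ℂ) = F.eval z := by
    rw [Polynomial.aeval_def, Polynomial.eval_map]
  rw [hev]
  conv_lhs => rw [hfac]
  rw [Polynomial.eval_mul, Polynomial.eval_C, Polynomial.eval_multiset_prod, norm_mul]
  congr 1
  rw [Multiset.map_map]
  rw [show ∀ s : Multiset ℂ, ‖s.prod‖ = (s.map fun x => ‖x‖).prod from
    fun s => map_multiset_prod (normHom (α := ℂ)) s, Multiset.map_map]
  congr 1
  ext r
  simp

lemma card_roots_map (f : ℝ[X]) :
    Multiset.card ((f.map (algebraMap ℝ ℂ)).roots) = f.natDegree := by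
  set F := f.map (algebraMap ℝ ℂ) with hF
  have hsplit : F.Splits := IsAlgClosed.splits F
  rw [Polynomial.splits_iff_card_roots.1 hsplit, hF]
  exact f.natDegree_map_eq_of_injective (algebraMap ℝ ℂ).injective

lemma roots_re_neg (f : ℝ[X]) (hst : ∀ z : ℂ, Polynomial.aeval z f = 0 → z.re < 0) :
    ∀ r ∈ (f.map (algebraMap ℝ ℂ)).roots, r.re < 0 := by
  intro r hr
  apply hst
  have := Polynomial.isRoot_of_mem_roots hr
  rw [Polynomial.IsRoot, Polynomial.eval_map] at this
  rw [Polynomial.aeval_def]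
  exact this

lemma abs_aeval_neg_lt (f : ℝ[X]) (hd : 1 ≤ f.natDegree)
    (hst : ∀ z : ℂ, Polynomial.aeval z f = 0 → z.re < 0)
    (z : ℂ) (hz : 0 < z.re) :
    ‖Polynomial.aeval (-z) f‖ < ‖Polynomial.aeval z f‖ := by
  have hf : f ≠ 0 := fun h => by simp [h] at hd
  have key : (Polynomial.aeval (-z) f : ℂ) = conj' (Polynomial.aeval (-(conj' z)) f) := by
    rw [← Polynomial.aeval_conj]
    congr 1
    simp
  rw [key, Complex.norm_conj, abs_aeval_eq_prod f (-(conj' z)), abs_aeval_eq_prod f z]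
  have hprodeq : (((f.map (algebraMap ℝ ℂ)).roots).map fun r => ‖-(conj' z) - r‖).prod
      = (((f.map (algebraMap ℝ ℂ)).roots).map fun r => ‖(conj' z) + r‖).prod := by
    congr 1
    apply Multiset.map_congr rfl
    intro r _
    rw [show -(conj' z) - r = -((conj' z) + r) by ring, norm_neg]
  rw [hprodeq]
  have hlc : 0 < ‖(f.map (algebraMap ℝ ℂ)).leadingCoeff‖ := by
    rw [norm_pos_iff]
    intro h
    rw [Polynomial.leadingCoeff_eq_zero] at h
    exact hf (by simpa [Polynomial.map_eq_zero_iff (algebraMap ℝ ℂ).injective] using h)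
  apply mul_lt_mul_of_pos_left _ hlc
  apply prod_abs_lt z hz _ (roots_re_neg f hst)
  rw [card_roots_map f]
  omega

/-- Claim A : for a stable real polynomial written as a sum of its two parity parts,
`Re (E(z) * conj (O(z))) > 0` on the open right half plane. -/
lemma claimA (f Ef Of : ℝ[X]) (hd : 1 ≤ f.natDegree)
    (hst : ∀ z : ℂ, Polynomial.aeval z f = 0 → z.re < 0)
    (hsum : Ef + Of = f) (σ : ℂ) (hσ : σ = 1 ∨ σ = -1)
    (hE : ∀ z : ℂ, Polynomial.aeval (-z) Ef = σ * Polynomial.aeval z Ef)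
    (hO : ∀ z : ℂ, Polynomial.aeval (-z) Of = -(σ * Polynomial.aeval z Of)) :
    ∀ z : ℂ, 0 < z.re →
      0 < ((Polynomial.aeval z Ef : ℂ) * conj' (Polynomial.aeval z Of)).re := by
  intro z hz
  have habs := abs_aeval_neg_lt f hd hst z hz
  set a : ℂ := Polynomial.aeval z Ef
  set b : ℂ := Polynomial.aeval z Of
  have hfz : (Polynomial.aeval z f : ℂ) = a + b := by rw [← hsum]; simp; rfl
  have hfnz : (Polynomial.aeval (-z) f : ℂ) = σ * (a - b) := by
    rw [← hsum]
    simp only [map_add, hE z, hO z]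
    ring
  rw [hfz, hfnz] at habs
  have hσabs : ‖σ‖ = 1 := by rcases hσ with h | h <;> simp [h]
  rw [norm_mul, hσabs, one_mul] at habs
  have hsq : Complex.normSq (a - b) < Complex.normSq (a + b) := by
    have h1 : ‖a-b‖ ^ 2 < ‖a+b‖ ^ 2 := by
      apply pow_lt_pow_left₀ habs (norm_nonneg _)
      norm_num
    simpa [Complex.sq_norm] using h1
  have hid : Complex.normSq (a + b) - Complex.normSq (a - b) = 4 * (a * conj' b).re := by
    simp only [Complex.normSq_apply, Complex.add_re, Complex.add_im, Complex.sub_re,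
      Complex.sub_im, Complex.mul_re, Complex.mul_im, Complex.conj_re, Complex.conj_im]
    ring
  nlinarith [hsq, hid]

/-- Claim A on the left half plane. -/
lemma claimA' (f Ef Of : ℝ[X]) (hd : 1 ≤ f.natDegree)
    (hst : ∀ z : ℂ, Polynomial.aeval z f = 0 → z.re < 0)
    (hsum : Ef + Of = f) (σ : ℂ) (hσ : σ = 1 ∨ σ = -1)
    (hE : ∀ z : ℂ, Polynomial.aeval (-z) Ef = σ * Polynomial.aeval z Ef)
    (hO : ∀ z : ℂ, Polynomial.aeval (-z) Of = -(σ * Polynomial.aeval z Of)) :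
    ∀ z : ℂ, z.re < 0 →
      ((Polynomial.aeval z Ef : ℂ) * conj' (Polynomial.aeval z Of)).re < 0 := by
  intro z hz
  have hw := claimA f Ef Of hd hst hsum σ hσ hE hO (-z) (by simpa using hz)
  have hEz : (Polynomial.aeval z Ef : ℂ) = σ * Polynomial.aeval (-z) Ef := by
    have := hE (-z); rw [neg_neg] at this; rw [this]
  have hOz : (Polynomial.aeval z Of : ℂ) = -(σ * Polynomial.aeval (-z) Of) := by
    have := hO (-z); rw [neg_neg] at this; rw [this]
  have hσc : conj' σ = σ := by rcases hσ with h | h <;> simp [h]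
  have hσsq : σ * σ = 1 := by rcases hσ with h | h <;> simp [h]
  have : (Polynomial.aeval z Ef : ℂ) * conj' (Polynomial.aeval z Of)
      = -((Polynomial.aeval (-z) Ef : ℂ) * conj' (Polynomial.aeval (-z) Of)) := by
    rw [hEz, hOz]
    simp only [map_neg, map_mul, hσc]
    calc σ * (Polynomial.aeval (-z) Ef : ℂ) * -(σ * conj' (Polynomial.aeval (-z) Of))
        = -((σ*σ) * ((Polynomial.aeval (-z) Ef : ℂ) * conj' (Polynomial.aeval (-z) Of))) := by ring
      _ = _ := by rw [hσsq, one_mul]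
  rw [this, Complex.neg_re]
  linarith

end RH

namespace RH
open Complex Polynomial Filter Topology
local notation "conj'" => starRingEnd ℂ

/-- Local analysis at a root of `Of` on the imaginary axis: the root is on the axis,
it is a simple root, and the "residue" `Ef(z₀)/O₁(z₀)` is a positive real number. -/
lemma axis_root_simple (f Ef Of : ℝ[X]) (hd : 1 ≤ f.natDegree)
    (hst : ∀ z : ℂ, Polynomial.aeval z f = 0 → z.re < 0)
    (hsum : Ef + Of = f) (σ : ℂ) (hσ : σ = 1 ∨ σ = -1)
    (hE : ∀ z : ℂ, Polynomial.aeval (-z) Ef = σ * Polynomial.aeval z Ef)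
    (hO : ∀ z : ℂ, Polynomial.aeval (-z) Of = -(σ * Polynomial.aeval z Of))
    (hOf0 : Of ≠ 0) (z₀ : ℂ) (hroot : Polynomial.aeval z₀ Of = 0) :
    z₀.re = 0 ∧
    rootMultiplicity z₀ (Of.map (algebraMap ℝ ℂ)) = 1 ∧
    ∃ a : ℝ, 0 < a ∧ (Polynomial.aeval z₀ Ef : ℂ) =
      (a : ℂ) * (((Of.map (algebraMap ℝ ℂ)) /ₘ
        (X - C z₀) ^ (rootMultiplicity z₀ (Of.map (algebraMap ℝ ℂ)))).eval z₀) := by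
  have hre0 : z₀.re = 0 := by
    rcases lt_trichotomy z₀.re 0 with h | h | h
    · have := claimA' f Ef Of hd hst hsum σ hσ hE hO z₀ h
      rw [hroot] at this
      simp at this
    · exact h
    · have := claimA f Ef Of hd hst hsum σ hσ hE hO z₀ h
      rw [hroot] at this
      simp at this
  set OF : ℂ[X] := Of.map (algebraMap ℝ ℂ) with hOF
  have hOF0 : OF ≠ 0 := by
    simp only [hOF, ne_eq, Polynomial.map_eq_zero_iff (algebraMap ℝ ℂ).injective]
    exact hOf0
  have hevOF : ∀ z : ℂ, OF.eval z = Polynomial.aeval z Of := by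
    intro z; rw [Polynomial.aeval_def, Polynomial.eval_map]
  set m : ℕ := rootMultiplicity z₀ OF with hm
  have hm1 : 1 ≤ m := by
    rw [hm]
    rw [Nat.one_le_iff_ne_zero]
    intro h
    have := (Polynomial.rootMultiplicity_pos hOF0 (x := z₀)).2
      (by rw [Polynomial.IsRoot, hevOF]; exact hroot)
    omega
  set O₁ : ℂ[X] := OF /ₘ (X - C z₀) ^ m with hO₁def
  have hfact : (X - C z₀) ^ m * O₁ = OF :=
    Polynomial.pow_mul_divByMonic_rootMultiplicity_eq OF z₀
  have hO₁ne : O₁.eval z₀ ≠ 0 :=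
    Polynomial.eval_divByMonic_pow_rootMultiplicity_ne_zero z₀ hOF0
  have hEfne : (Polynomial.aeval z₀ Ef : ℂ) ≠ 0 := by
    intro h
    have hf0 : (Polynomial.aeval z₀ f : ℂ) = 0 := by
      rw [← hsum]; simp [h, hroot]
    have := hst z₀ hf0
    rw [hre0] at this
    exact lt_irrefl 0 this
  set B : ℂ := (Polynomial.aeval z₀ Ef : ℂ) * conj' (O₁.eval z₀) with hB
  have hBne : B ≠ 0 := by
    apply mul_ne_zero hEfne
    simpa using hO₁ne
  -- the function g
  set g : ℝ → ℝ := fun θ => B.re * Real.cos (m * θ) + B.im * Real.sin (m * θ) with hg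
  have hgcont : Continuous g := by fun_prop
  -- positivity of g on the open interval
  have hgIoo : ∀ θ ∈ Set.Ioo (-(Real.pi/2)) (Real.pi/2), 0 ≤ g θ := by
    intro θ hθ
    have hcos : 0 < Real.cos θ := Real.cos_pos_of_mem_Ioo hθ
    set s : ℝ → ℂ := fun ε => z₀ + (ε : ℂ) * Complex.exp ((θ : ℂ) * I) with hs
    set hfun : ℝ → ℝ := fun ε =>
      ((Polynomial.aeval (s ε) Ef : ℂ) * conj' (O₁.eval (s ε)) *
        (Complex.exp (-(θ : ℂ) * I)) ^ m).re with hhfun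
    have hexp : ∀ ε : ℝ, (s ε).re = ε * Real.cos θ := by
      intro ε
      simp [hs, hre0, Complex.exp_mul_I, Complex.add_re, Complex.mul_re,
        Complex.cos_ofReal_re, Complex.sin_ofReal_im]
    have hpos : ∀ ε : ℝ, 0 < ε → 0 < hfun ε := by
      intro ε hε
      have hsre : 0 < (s ε).re := by rw [hexp ε]; positivity
      have hmain := claimA f Ef Of hd hst hsum σ hσ hE hO (s ε) hsre
      have hOval : (Polynomial.aeval (s ε) Of : ℂ)
          = ((ε:ℂ) * Complex.exp ((θ : ℂ) * I)) ^ m * O₁.eval (s ε) := by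
        rw [← hevOF, ← hfact]
        have : s ε - z₀ = (ε:ℂ) * Complex.exp ((θ : ℂ) * I) := by rw [hs]; ring
        simp [Polynomial.eval_mul, Polynomial.eval_pow, this]
      have hconj : conj' ((( ε:ℂ) * Complex.exp ((θ : ℂ) * I)) ^ m)
          = (ε:ℂ) ^ m * (Complex.exp (-(θ : ℂ) * I)) ^ m := by
        rw [map_pow, map_mul, mul_pow]
        congr 2
        · simp
        · rw [← Complex.exp_conj]
          congr 1
          simp [Complex.ext_iff]
      have hrewrite : (Polynomial.aeval (s ε) Ef : ℂ) * conj' (Polynomial.aeval (s ε) Of)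
          = (ε:ℂ)^m * ((Polynomial.aeval (s ε) Ef : ℂ) * conj' (O₁.eval (s ε)) *
              (Complex.exp (-(θ : ℂ) * I)) ^ m) := by
        rw [hOval, map_mul, hconj]
        ring
      rw [hrewrite] at hmain
      have hcast : ((ε:ℂ)^m * ((Polynomial.aeval (s ε) Ef : ℂ) * conj' (O₁.eval (s ε)) *
              (Complex.exp (-(θ : ℂ) * I)) ^ m)).re = ε^m * hfun ε := by
        rw [show ((ε:ℂ)^m) = ((ε^m : ℝ) : ℂ) by push_cast; ring]
        rw [Complex.re_ofReal_mul]
      rw [hcast] at hmain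
      have hεm : 0 < ε ^ m := by positivity
      nlinarith
    -- the limit of hfun as ε → 0⁺ is g θ
    have hcont : Continuous hfun := by
      apply Complex.continuous_re.comp
      apply Continuous.mul
      apply Continuous.mul
      · exact (Polynomial.continuous_aeval Ef).comp (by fun_prop)
      · exact Complex.continuous_conj.comp (O₁.continuous.comp (by fun_prop))
      · exact continuous_const
    have hval : hfun 0 = g θ := by
      have hs0 : s 0 = z₀ := by simp [hs]
      have hexpm : (Complex.exp (-(θ : ℂ) * I)) ^ m
          = ((Real.cos (m*θ) : ℝ) : ℂ) - ((Real.sin (m*θ) : ℝ) : ℂ) * I := by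
        rw [← Complex.exp_nat_mul]
        have harg : (m:ℂ) * (-(θ:ℂ) * I) = ((-(m*θ) : ℝ) : ℂ) * I := by push_cast; ring
        rw [harg, Complex.exp_mul_I, ← Complex.ofReal_cos, ← Complex.ofReal_sin,
          Real.cos_neg, Real.sin_neg]
        push_cast
        ring
      rw [hhfun]
      simp only [hs0, hexpm]
      have habs : ∀ (w : ℂ) (c s' : ℝ), (w * ((c:ℂ) - (s':ℂ) * I)).re = w.re * c + w.im * s' := by
        intro w c s'
        simp only [Complex.mul_re, Complex.sub_re, Complex.sub_im, Complex.ofReal_re,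
          Complex.ofReal_im, Complex.mul_im, Complex.I_re, Complex.I_im]
        ring
      rw [habs]
    have htend : Tendsto hfun (𝓝[>] (0:ℝ)) (𝓝 (g θ)) := by
      rw [← hval]
      exact (hcont.tendsto 0).mono_left nhdsWithin_le_nhds
    refine ge_of_tendsto htend ?_
    filter_upwards [self_mem_nhdsWithin] with ε hε
    exact le_of_lt (hpos ε hε)
  -- extend to the closed interval
  have hgIcc : ∀ θ ∈ Set.Icc (-(Real.pi/2)) (Real.pi/2), 0 ≤ g θ := by
    have hclosed : IsClosed {θ : ℝ | 0 ≤ g θ} := isClosed_le continuous_const hgcont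
    intro θ hθ
    have h1 : Set.Icc (-(Real.pi/2)) (Real.pi/2) = closure (Set.Ioo (-(Real.pi/2)) (Real.pi/2)) := by
      rw [closure_Ioo]
      have := Real.pi_pos
      intro h; rw [← h] at *; linarith [Real.pi_pos]
    rw [h1] at hθ
    have hsub : Set.Ioo (-(Real.pi/2)) (Real.pi/2) ⊆ {θ : ℝ | 0 ≤ g θ} := hgIoo
    exact (hclosed.closure_subset_iff.2 hsub) hθ
  have hπ := Real.pi_pos
  have hmR : (0:ℝ) < m := by exact_mod_cast hm1
  have hm1R : (1:ℝ) ≤ (m:ℝ) := by exact_mod_cast hm1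
  have harg1 : (m:ℝ) * (Real.pi/(2*m)) = Real.pi/2 := by field_simp
  have harg2 : (m:ℝ) * (-(Real.pi/(2*m))) = -(Real.pi/2) := by field_simp
  have hmem1 : (Real.pi/(2*m)) ∈ Set.Icc (-(Real.pi/2)) (Real.pi/2) := by
    constructor
    · have : 0 < Real.pi/(2*m) := by positivity
      linarith
    · rw [div_le_div_iff₀ (by positivity) (by norm_num)]
      nlinarith
  have hmem2 : (-(Real.pi/(2*m))) ∈ Set.Icc (-(Real.pi/2)) (Real.pi/2) := by
    constructor
    · rw [neg_le_neg_iff, div_le_div_iff₀ (by positivity) (by norm_num)]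
      nlinarith
    · have : 0 < Real.pi/(2*m) := by positivity
      linarith
  -- B.im = 0
  have hBim : B.im = 0 := by
    have h1 := hgIcc _ hmem1
    have h2 := hgIcc _ hmem2
    rw [hg] at h1 h2
    simp only [harg1, harg2, Real.cos_pi_div_two, Real.sin_pi_div_two, Real.cos_neg,
      Real.sin_neg] at h1 h2
    simp at h1 h2
    linarith
  have hg0 := hgIcc 0 ⟨by linarith, by linarith⟩
  rw [hg] at hg0
  simp at hg0
  -- m = 1
  have hmeq : m = 1 := by
    by_contra hne
    have hm2 : 2 ≤ m := by omega
    have hm2R : (2:ℝ) ≤ (m:ℝ) := by exact_mod_cast hm2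
    have harg3 : (m:ℝ) * (Real.pi/m) = Real.pi := by field_simp
    have hmem3 : (Real.pi/m) ∈ Set.Icc (-(Real.pi/2)) (Real.pi/2) := by
      constructor
      · have : 0 < Real.pi/m := by positivity
        linarith
      · rw [div_le_div_iff₀ (by positivity) (by norm_num)]
        nlinarith
    have h3 := hgIcc _ hmem3
    rw [hg] at h3
    simp only [harg3, Real.cos_pi, Real.sin_pi] at h3
    simp at h3
    have hBre : B.re = 0 := le_antisymm h3 hg0
    exact hBne (Complex.ext hBre hBim)
  -- B.re > 0
  have hBre : 0 < B.re := by
    rcases lt_or_eq_of_le hg0 with h | h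
    · exact h
    · exact absurd (Complex.ext h.symm hBim) hBne
  refine ⟨hre0, hmeq, ?_⟩
  set o : ℂ := O₁.eval z₀ with ho
  have hnsq : 0 < Complex.normSq o := Complex.normSq_pos.2 hO₁ne
  refine ⟨B.re / Complex.normSq o, by positivity, ?_⟩
  have hBval : ((B.re : ℝ) : ℂ) = B := by
    apply Complex.ext <;> simp [hBim]
  have hnz : ((Complex.normSq o : ℝ) : ℂ) ≠ 0 := by exact_mod_cast hnsq.ne'
  have hconjo : conj' o * o = ((Complex.normSq o : ℝ) : ℂ) := by
    rw [mul_comm]; exact Complex.mul_conj o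
  have hkey : ((B.re / Complex.normSq o : ℝ) : ℂ) * o = Polynomial.aeval z₀ Ef := by
    calc ((B.re / Complex.normSq o : ℝ) : ℂ) * o
        = B * o / ((Complex.normSq o : ℝ) : ℂ) := by
          rw [Complex.ofReal_div, hBval]; ring
      _ = (Polynomial.aeval z₀ Ef : ℂ) * (conj' o * o) / ((Complex.normSq o : ℝ) : ℂ) := by
          rw [hB]; ring
      _ = (Polynomial.aeval z₀ Ef : ℂ) * ((Complex.normSq o : ℝ) : ℂ) / ((Complex.normSq o : ℝ) : ℂ) := by
          rw [hconjo]
      _ = Polynomial.aeval z₀ Ef := by field_simp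
  exact hkey.symm

end RH

namespace RH
open Complex Polynomial Filter Topology
local notation "conj'" => starRingEnd ℂ

noncomputable def Epart (p : ℝ[X]) : ℝ[X] := p - Opart p

noncomputable def cRH (p : ℝ[X]) : ℝ := p.coeff p.natDegree / p.coeff (p.natDegree - 1)

noncomputable def red (p : ℝ[X]) : ℝ[X] := p - C (cRH p) * (X * Opart p)

noncomputable def E'p (p : ℝ[X]) : ℝ[X] := red p - Opart p

lemma Epart_add_Opart (p : ℝ[X]) : Epart p + Opart p = p := sub_add_cancel p (Opart p)

lemma E'p_add_Opart (p : ℝ[X]) : E'p p + Opart p = red p := sub_add_cancel _ _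

lemma E'p_eq (p : ℝ[X]) : E'p p = Epart p - C (cRH p) * (X * Opart p) := by
  unfold E'p red Epart; ring

lemma coeff_Opart_ge (p : ℝ[X]) {j : ℕ} (hj : p.natDegree ≤ j) : (Opart p).coeff j = 0 := by
  rw [coeff_Opart]
  rcases eq_or_lt_of_le hj with h | h
  · rw [if_neg]
    rw [← h]
    simp only [← Nat.not_even_iff_odd, not_not]
    exact ⟨p.natDegree, rfl⟩
  · rw [Polynomial.coeff_eq_zero_of_natDegree_lt h, ite_self]

lemma coeff_Opart_pred (p : ℝ[X]) (h1 : 1 ≤ p.natDegree) :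
    (Opart p).coeff (p.natDegree - 1) = p.coeff (p.natDegree - 1) := by
  rw [coeff_Opart, if_pos]
  exact ⟨p.natDegree - 1, by omega⟩

lemma natDegree_Opart_le (p : ℝ[X]) : (Opart p).natDegree ≤ p.natDegree - 1 := by
  rcases Nat.eq_zero_or_pos p.natDegree with h0 | h0
  · rw [Polynomial.natDegree_le_iff_coeff_eq_zero]
    intro N hN
    exact coeff_Opart_ge p (by omega)
  · rw [Polynomial.natDegree_le_iff_coeff_eq_zero]
    intro N hN
    exact coeff_Opart_ge p (by omega)

lemma natDegree_Opart (p : ℝ[X]) (h1 : 1 ≤ p.natDegree)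
    (hb1 : p.coeff (p.natDegree - 1) ≠ 0) : (Opart p).natDegree = p.natDegree - 1 := by
  refine le_antisymm (natDegree_Opart_le p) ?_
  apply Polynomial.le_natDegree_of_ne_zero
  rw [coeff_Opart_pred p h1]
  exact hb1

lemma Opart_ne_zero (p : ℝ[X]) (h1 : 1 ≤ p.natDegree)
    (hb1 : p.coeff (p.natDegree - 1) ≠ 0) : Opart p ≠ 0 := by
  intro h
  apply hb1
  rw [← coeff_Opart_pred p h1, h, Polynomial.coeff_zero]

lemma coeff_XOpart (p : ℝ[X]) (j : ℕ) :
    (X * Opart p).coeff j = if j = 0 then 0 else (Opart p).coeff (j - 1) := by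
  cases j with
  | zero => simp [Polynomial.mul_coeff_zero]
  | succ k => simp [Polynomial.coeff_X_mul]

lemma coeff_red (p : ℝ[X]) (j : ℕ) :
    (red p).coeff j = p.coeff j - cRH p * (X * Opart p).coeff j := by
  unfold red
  rw [Polynomial.coeff_sub, Polynomial.coeff_C_mul]

lemma coeff_red_natDegree (p : ℝ[X]) (h1 : 1 ≤ p.natDegree)
    (hb1 : p.coeff (p.natDegree - 1) ≠ 0) : (red p).coeff p.natDegree = 0 := by
  rw [coeff_red, coeff_XOpart, if_neg (by omega), coeff_Opart_pred p h1, cRH]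
  field_simp
  ring

lemma coeff_red_pred (p : ℝ[X]) (h2 : 2 ≤ p.natDegree) :
    (red p).coeff (p.natDegree - 1) = p.coeff (p.natDegree - 1) := by
  rw [coeff_red, coeff_XOpart, if_neg (by omega), coeff_Opart]
  rw [if_neg, mul_zero, sub_zero]
  rw [← Nat.not_even_iff_odd, not_not]
  exact ⟨p.natDegree - 1, by omega⟩

lemma coeff_red_gt (p : ℝ[X]) {j : ℕ} (hj : p.natDegree < j) : (red p).coeff j = 0 := by
  rw [coeff_red, coeff_XOpart, if_neg (by omega), coeff_Opart_ge p (by omega),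
    Polynomial.coeff_eq_zero_of_natDegree_lt hj, mul_zero, sub_zero]

lemma natDegree_red (p : ℝ[X]) (h2 : 2 ≤ p.natDegree)
    (hb1 : p.coeff (p.natDegree - 1) ≠ 0) : (red p).natDegree = p.natDegree - 1 := by
  refine le_antisymm ?_ ?_
  · rw [Polynomial.natDegree_le_iff_coeff_eq_zero]
    intro N hN
    rcases eq_or_lt_of_le (show p.natDegree ≤ N by omega) with h | h
    · rw [← h]; exact coeff_red_natDegree p (by omega) hb1
    · exact coeff_red_gt p h
  · apply Polynomial.le_natDegree_of_ne_zero
    rw [coeff_red_pred p h2]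
    exact hb1

lemma red_ne_zero (p : ℝ[X]) (h2 : 2 ≤ p.natDegree)
    (hb1 : p.coeff (p.natDegree - 1) ≠ 0) : red p ≠ 0 := by
  intro h
  apply hb1
  rw [← coeff_red_pred p h2, h, Polynomial.coeff_zero]

lemma coeff_Epart_vanish (p : ℝ[X]) : ∀ j : ℕ, ¬ Even (p.natDegree + j) → (Epart p).coeff j = 0 := by
  intro j hj
  unfold Epart
  rw [Polynomial.coeff_sub, coeff_Opart, if_pos (Nat.not_even_iff_odd.1 hj), sub_self]

lemma coeff_Opart_vanish (p : ℝ[X]) :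
    ∀ j : ℕ, ¬ Even (p.natDegree + 1 + j) → (Opart p).coeff j = 0 := by
  intro j hj
  rw [coeff_Opart, if_neg]
  rw [← Nat.not_even_iff_odd, not_not]
  simp only [Nat.even_iff] at hj ⊢
  omega

lemma coeff_XOpart_vanish (p : ℝ[X]) :
    ∀ j : ℕ, ¬ Even (p.natDegree + j) → (X * Opart p).coeff j = 0 := by
  intro j hj
  rw [coeff_XOpart]
  cases j with
  | zero => simp
  | succ k =>
    rw [if_neg (by omega)]
    simp only [Nat.add_sub_cancel]
    apply coeff_Opart_vanish
    have h : p.natDegree + 1 + k = p.natDegree + (k+1) := by omega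
    rw [h]
    exact hj

lemma coeff_E'p_vanish (p : ℝ[X]) : ∀ j : ℕ, ¬ Even (p.natDegree + j) → (E'p p).coeff j = 0 := by
  intro j hj
  rw [E'p_eq, Polynomial.coeff_sub, Polynomial.coeff_C_mul, coeff_Epart_vanish p j hj,
    coeff_XOpart_vanish p j hj, mul_zero, sub_self]

end RH

namespace RH
open Complex Polynomial Filter Topology
local notation "conj'" => starRingEnd ℂ

lemma sigma_cases (n : ℕ) : ((-1:ℂ))^n = 1 ∨ ((-1:ℂ))^n = -1 := by
  rcases Nat.even_or_odd n with h | h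
  · left; exact h.neg_one_pow
  · right; exact h.neg_one_pow

lemma aeval_neg_Epart (p : ℝ[X]) (z : ℂ) :
    Polynomial.aeval (-z) (Epart p) = ((-1:ℂ))^p.natDegree * Polynomial.aeval z (Epart p) :=
  aeval_neg_of_parity (Epart p) p.natDegree (coeff_Epart_vanish p) z

lemma aeval_neg_Opart (p : ℝ[X]) (z : ℂ) :
    Polynomial.aeval (-z) (Opart p) = -(((-1:ℂ))^p.natDegree * Polynomial.aeval z (Opart p)) := by
  have h := aeval_neg_of_parity (Opart p) (p.natDegree + 1) (coeff_Opart_vanish p) z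
  rw [h, pow_succ]
  ring

lemma aeval_neg_E'p (p : ℝ[X]) (z : ℂ) :
    Polynomial.aeval (-z) (E'p p) = ((-1:ℂ))^p.natDegree * Polynomial.aeval z (E'p p) :=
  aeval_neg_of_parity (E'p p) p.natDegree (coeff_E'p_vanish p) z

lemma aeval_Epart_decomp (p : ℝ[X]) (z : ℂ) :
    Polynomial.aeval z (Epart p) = Polynomial.aeval z (E'p p)
      + (cRH p : ℂ) * (z * Polynomial.aeval z (Opart p)) := by
  rw [E'p_eq]
  simp only [map_sub, map_mul, Polynomial.aeval_C, Polynomial.aeval_X]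
  ring_nf
  simp [Algebra.algebraMap_eq_smul_one, Complex.real_smul]
  ring

lemma key_pos (p : ℝ[X]) (h2 : 2 ≤ p.natDegree)
    (hb1 : 0 < p.coeff (p.natDegree - 1))
    (hst : ∀ z : ℂ, Polynomial.aeval z p = 0 → z.re < 0) :
    ∀ w : ℂ, 0 < w.re →
      0 < ((Polynomial.aeval w (E'p p) : ℂ) * conj' (Polynomial.aeval w (Opart p))).re := by
  have h1 : 1 ≤ p.natDegree := by omega
  set n := p.natDegree with hn
  set σ : ℂ := (-1:ℂ)^n with hσdef
  have hσ : σ = 1 ∨ σ = -1 := sigma_cases n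
  have hb1' : p.coeff (n-1) ≠ 0 := ne_of_gt hb1
  have hb1C : ((p.coeff (n-1) : ℝ) : ℂ) ≠ 0 := by exact_mod_cast hb1'
  set OC : ℂ[X] := (Opart p).map (algebraMap ℝ ℂ) with hOCdef
  have hOne : Opart p ≠ 0 := Opart_ne_zero p h1 hb1'
  have hOC0 : OC ≠ 0 := by
    simp only [hOCdef, ne_eq, Polynomial.map_eq_zero_iff (algebraMap ℝ ℂ).injective]
    exact hOne
  have hevO : ∀ z : ℂ, OC.eval z = Polynomial.aeval z (Opart p) := fun z => by
    rw [Polynomial.aeval_def, Polynomial.eval_map]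
  have hstep : ∀ z₀ : ℂ, Polynomial.aeval z₀ (Opart p) = 0 →
      z₀.re = 0 ∧ rootMultiplicity z₀ OC = 1 ∧
      ∃ a : ℝ, 0 < a ∧ (Polynomial.aeval z₀ (Epart p) : ℂ) =
        (a : ℂ) * ((OC /ₘ (X - C z₀) ^ (rootMultiplicity z₀ OC)).eval z₀) := by
    intro z₀ hz₀
    exact axis_root_simple p (Epart p) (Opart p) h1 hst (Epart_add_Opart p) σ hσ
      (aeval_neg_Epart p) (aeval_neg_Opart p) hOne z₀ hz₀
  have hrootO : ∀ r ∈ OC.roots, Polynomial.aeval r (Opart p) = 0 := by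
    intro r hr
    rw [← hevO]
    exact Polynomial.isRoot_of_mem_roots hr
  have hmult1 : ∀ r ∈ OC.roots, rootMultiplicity r OC = 1 := fun r hr =>
    (hstep r (hrootO r hr)).2.1
  have hnodup : OC.roots.Nodup := by
    rw [Multiset.nodup_iff_count_le_one]
    intro r
    by_cases hr : r ∈ OC.roots
    · rw [Polynomial.count_roots, hmult1 r hr]
    · simp [Multiset.count_eq_zero_of_notMem hr]
  have hre0 : ∀ r ∈ OC.roots, r.re = 0 := fun r hr => (hstep r (hrootO r hr)).1
  have hdegOC : OC.natDegree = n - 1 := by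
    rw [hOCdef, (Opart p).natDegree_map_eq_of_injective (algebraMap ℝ ℂ).injective]
    exact natDegree_Opart p h1 hb1'
  have hcard : Multiset.card OC.roots = n - 1 := by
    rw [Polynomial.splits_iff_card_roots.1 (IsAlgClosed.splits OC), hdegOC]
  set t : Finset ℂ := OC.roots.toFinset with htdef
  have htval : t.val = OC.roots := Multiset.dedup_eq_self.2 hnodup
  have htcard : t.card = n - 1 := by
    rw [Finset.card, htval, hcard]
  have hmem_t : ∀ r, r ∈ t ↔ r ∈ OC.roots := fun r => Multiset.mem_toFinset
  have hre0t : ∀ r ∈ t, r.re = 0 := fun r hr => hre0 r ((hmem_t r).1 hr)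
  have hleadOC : OC.leadingCoeff = ((p.coeff (n-1) : ℝ) : ℂ) := by
    rw [Polynomial.leadingCoeff, hdegOC, hOCdef, Polynomial.coeff_map,
      coeff_Opart_pred p h1]
    rfl
  have hfacO : OC = C ((p.coeff (n-1) : ℝ) : ℂ) * ∏ r ∈ t, (X - C r) := by
    have h := (IsAlgClosed.splits OC).eq_prod_roots
    rw [hleadOC] at h
    rw [h, Finset.prod_eq_multiset_prod, htval]
  set P₁ : ℂ → ℂ[X] := fun r => C ((p.coeff (n-1) : ℝ) : ℂ) * ∏ j ∈ t.erase r, (X - C j)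
    with hP₁def
  have hOfac_r : ∀ r ∈ t, OC = (X - C r) * P₁ r := by
    intro r hr
    rw [hfacO, ← Finset.mul_prod_erase t _ hr, hP₁def]
    ring
  have hP₁ne : ∀ r ∈ t, (P₁ r).eval r ≠ 0 := by
    intro r hr
    rw [hP₁def]
    simp only [Polynomial.eval_mul, Polynomial.eval_C, Polynomial.eval_prod,
      Polynomial.eval_sub, Polynomial.eval_X]
    apply mul_ne_zero hb1C
    rw [Finset.prod_ne_zero_iff]
    intro j hj
    have : j ≠ r := (Finset.mem_erase.1 hj).1
    exact sub_ne_zero.2 (Ne.symm this)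
  have hres : ∀ r ∈ t, ∃ a : ℝ, 0 < a ∧
      (Polynomial.aeval r (Epart p) : ℂ) = (a : ℂ) * (P₁ r).eval r := by
    intro r hr
    obtain ⟨-, hm1, a, ha, heq⟩ := hstep r (hrootO r ((hmem_t r).1 hr))
    refine ⟨a, ha, ?_⟩
    have hdiv : OC /ₘ (X - C r) ^ (rootMultiplicity r OC) = P₁ r := by
      have hfa := Polynomial.pow_mul_divByMonic_rootMultiplicity_eq OC r
      rw [hm1, pow_one] at hfa
      have h2 := hOfac_r r hr
      have : (X - C r) * (OC /ₘ (X - C r) ^ (rootMultiplicity r OC)) = (X - C r) * P₁ r := by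
        rw [hm1, pow_one, hfa, ← h2]
      exact mul_left_cancel₀ (Polynomial.X_sub_C_ne_zero r) this
    rw [heq, hdiv]
  set E'C : ℂ[X] := (E'p p).map (algebraMap ℝ ℂ) with hE'Cdef
  have hevE' : ∀ z : ℂ, E'C.eval z = Polynomial.aeval z (E'p p) := fun z => by
    rw [Polynomial.aeval_def, Polynomial.eval_map]
  have hE'r : ∀ r ∈ t, (Polynomial.aeval r (E'p p) : ℂ) = Polynomial.aeval r (Epart p) := by
    intro r hr
    have h := aeval_Epart_decomp p r
    rw [hrootO r ((hmem_t r).1 hr)] at h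
    rw [h]
    ring
  -- degree bound for E'
  have hE'deg : (E'p p).natDegree ≤ n - 2 := by
    rw [Polynomial.natDegree_le_iff_coeff_eq_zero]
    intro N hN
    rcases lt_trichotomy N n with h | h | h
    · have hNn : N = n - 1 := by omega
      apply coeff_E'p_vanish
      rw [hNn]
      simp only [Nat.even_iff]
      omega
    · subst h
      rw [E'p_eq, Polynomial.coeff_sub, Polynomial.coeff_C_mul]
      unfold Epart
      rw [Polynomial.coeff_sub, coeff_Opart_ge p (le_refl _), sub_zero, coeff_XOpart,
        if_neg (by omega), coeff_Opart_pred p h1, cRH]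
      rw [← hn]
      field_simp
      ring
    · rw [E'p_eq, Polynomial.coeff_sub, Polynomial.coeff_C_mul]
      unfold Epart
      rw [Polynomial.coeff_sub, coeff_Opart_ge p (by omega),
        Polynomial.coeff_eq_zero_of_natDegree_lt (by omega), coeff_XOpart,
        if_neg (by omega), coeff_Opart_ge p (by omega)]
      ring
  have hE'Cdeg : E'C.natDegree ≤ n - 2 := by
    rw [hE'Cdef, (E'p p).natDegree_map_eq_of_injective (algebraMap ℝ ℂ).injective]
    exact hE'deg
  set A : ℂ → ℂ := fun r => E'C.eval r / (P₁ r).eval r with hAdef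
  have hA : ∀ r ∈ t, ∃ a : ℝ, 0 < a ∧ A r = (a:ℂ) ∧ E'C.eval r = (a:ℂ) * (P₁ r).eval r := by
    intro r hr
    obtain ⟨a, ha, heq⟩ := hres r hr
    have hval : E'C.eval r = (a:ℂ) * (P₁ r).eval r := by
      rw [hevE' r, hE'r r hr, heq]
    refine ⟨a, ha, ?_, hval⟩
    rw [hAdef]
    simp only
    rw [hval, mul_div_assoc, div_self (hP₁ne r hr), mul_one]
  set G : ℂ[X] := ∑ r ∈ t, C (A r) * P₁ r with hGdef
  have hGdeg : G.natDegree ≤ n - 2 := by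
    apply Polynomial.natDegree_sum_le_of_forall_le
    intro r hr
    apply le_trans (Polynomial.natDegree_mul_le)
    rw [Polynomial.natDegree_C, zero_add, hP₁def]
    apply le_trans (Polynomial.natDegree_mul_le)
    rw [Polynomial.natDegree_C, zero_add]
    apply le_trans (Polynomial.natDegree_prod_le _ _)
    have hsum : ∑ j ∈ t.erase r, (X - C j).natDegree = (t.erase r).card := by
      rw [Finset.sum_congr rfl (fun j _ => Polynomial.natDegree_X_sub_C j)]
      simp
    rw [hsum, Finset.card_erase_of_mem hr, htcard]
    omega
  have hGeval : ∀ x ∈ t, G.eval x = E'C.eval x := by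
    intro x hx
    rw [hGdef, Polynomial.eval_finset_sum]
    rw [Finset.sum_eq_single_of_mem x hx]
    · obtain ⟨a, ha, hAx, hval⟩ := hA x hx
      rw [Polynomial.eval_mul, Polynomial.eval_C, hAx, hval]
    · intro r hr hrx
      rw [Polynomial.eval_mul, hP₁def]
      simp only [Polynomial.eval_mul, Polynomial.eval_C, Polynomial.eval_prod,
        Polynomial.eval_sub, Polynomial.eval_X]
      have hxmem : x ∈ t.erase r := Finset.mem_erase.2 ⟨Ne.symm hrx, hx⟩
      rw [Finset.prod_eq_zero hxmem (by ring)]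
      ring
  have hGE : E'C = G := by
    have hzero : E'C - G = 0 := by
      apply Polynomial.eq_zero_of_natDegree_lt_card_of_eval_eq_zero' (E'C - G) t
      · intro x hx
        rw [Polynomial.eval_sub, hGeval x hx, sub_self]
      · apply lt_of_le_of_lt (Polynomial.natDegree_sub_le _ _)
        rw [htcard]
        omega
    exact sub_eq_zero.1 hzero
  -- final positivity
  intro w hw
  have hwr : ∀ j ∈ t, w ≠ j := by
    intro j hj h
    rw [h] at hw
    rw [hre0t j hj] at hw
    exact lt_irrefl 0 hw
  have hPw_ne : ∀ r ∈ t, (P₁ r).eval w ≠ 0 := by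
    intro r hr
    rw [hP₁def]
    simp only [Polynomial.eval_mul, Polynomial.eval_C, Polynomial.eval_prod,
      Polynomial.eval_sub, Polynomial.eval_X]
    apply mul_ne_zero hb1C
    rw [Finset.prod_ne_zero_iff]
    intro j hj
    exact sub_ne_zero.2 (hwr j (Finset.mem_of_mem_erase hj))
  have hrw1 : (Polynomial.aeval w (E'p p) : ℂ) = ∑ r ∈ t, A r * (P₁ r).eval w := by
    rw [← hevE' w, hGE, hGdef, Polynomial.eval_finset_sum]
    apply Finset.sum_congr rfl
    intro r _
    rw [Polynomial.eval_mul, Polynomial.eval_C]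
  have hrw2 : (Polynomial.aeval w (Opart p) : ℂ) = OC.eval w := (hevO w).symm
  rw [hrw1, hrw2, Finset.sum_mul, Complex.re_sum]
  apply Finset.sum_pos
  · intro r hr
    obtain ⟨a, ha, hAx, -⟩ := hA r hr
    have hOCw : OC.eval w = (w - r) * (P₁ r).eval w := by
      conv_lhs => rw [hOfac_r r hr]
      rw [Polynomial.eval_mul, Polynomial.eval_sub, Polynomial.eval_X, Polynomial.eval_C]
    have hPwne := hPw_ne r hr
    rw [hOCw, map_mul]
    have hcal : A r * (P₁ r).eval w * (conj' (w - r) * conj' ((P₁ r).eval w))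
        = ((a * Complex.normSq ((P₁ r).eval w) : ℝ) : ℂ) * conj' (w - r) := by
      rw [hAx]
      have h1 : (a:ℂ) * (P₁ r).eval w * (conj' (w - r) * conj' ((P₁ r).eval w))
          = (a:ℂ) * ((P₁ r).eval w * conj' ((P₁ r).eval w)) * conj' (w - r) := by ring
      rw [h1, Complex.mul_conj]
      push_cast
      ring
    rw [hcal, Complex.re_ofReal_mul, Complex.conj_re, Complex.sub_re, hre0t r hr, sub_zero]
    exact mul_pos (mul_pos ha (Complex.normSq_pos.2 hPwne)) hw
  · apply Finset.card_pos.1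
    rw [htcard]
    omega

end RH

namespace RH
open Complex Polynomial
local notation "conj'" => starRingEnd ℂ

lemma re_mul_conj_comm (x y : ℂ) : (x * conj' y).re = (y * conj' x).re := by
  simp only [Complex.mul_re, Complex.conj_re, Complex.conj_im]
  ring

theorem reduction_stable_iff (p : ℝ[X]) (h2 : 2 ≤ p.natDegree)
    (hb0 : 0 < p.coeff p.natDegree) (hb1 : 0 < p.coeff (p.natDegree - 1)) :
    (∀ z : ℂ, Polynomial.aeval z p = 0 → z.re < 0) ↔
      (∀ z : ℂ, Polynomial.aeval z (red p) = 0 → z.re < 0) := by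
  set n := p.natDegree with hn
  have h1 : 1 ≤ n := by omega
  set σ : ℂ := (-1:ℂ)^n with hσdef
  have hσ : σ = 1 ∨ σ = -1 := sigma_cases n
  have hσne : σ ≠ 0 := by rcases hσ with h | h <;> rw [h] <;> norm_num
  have hc : 0 < cRH p := div_pos hb0 hb1
  have hb1' : p.coeff (n-1) ≠ 0 := ne_of_gt hb1
  have hdecp : ∀ z : ℂ, (Polynomial.aeval z p : ℂ)
      = Polynomial.aeval z (Epart p) + Polynomial.aeval z (Opart p) := by
    intro z
    conv_lhs => rw [← Epart_add_Opart p]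
    rw [map_add]
  have hdecq : ∀ z : ℂ, (Polynomial.aeval z (red p) : ℂ)
      = Polynomial.aeval z (E'p p) + Polynomial.aeval z (Opart p) := by
    intro z
    conv_lhs => rw [← E'p_add_Opart p]
    rw [map_add]
  have hconjE' : ∀ z : ℂ, z.re = 0 → conj' (Polynomial.aeval z (E'p p) : ℂ)
      = σ * Polynomial.aeval z (E'p p) := by
    intro z hz
    have hcz : conj' z = -z := by
      apply Complex.ext <;> simp [hz]
    rw [← Polynomial.aeval_conj, hcz, aeval_neg_E'p]
  have hconjO : ∀ z : ℂ, z.re = 0 → conj' (Polynomial.aeval z (Opart p) : ℂ)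
      = -(σ * Polynomial.aeval z (Opart p)) := by
    intro z hz
    have hcz : conj' z = -z := by
      apply Complex.ext <;> simp [hz]
    rw [← Polynomial.aeval_conj, hcz, aeval_neg_Opart]
  constructor
  · -- hard direction: p stable → red p stable
    intro hp z hz
    by_contra hge
    push_neg at hge
    rcases eq_or_lt_of_le hge with heq | hlt
    · -- z on the imaginary axis
      set u : ℂ := Polynomial.aeval z (E'p p) with hu
      set v : ℂ := Polynomial.aeval z (Opart p) with hv
      have huv : u + v = 0 := by rw [hu, hv, ← hdecq z, hz]
      have hcu : conj' u = σ * u := hconjE' z heq.symm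
      have hcv : conj' v = -(σ * v) := hconjO z heq.symm
      have hueq : u = -v := by linear_combination huv
      have hcu2 : conj' u = σ * v := by
        rw [hueq, map_neg, hcv]
        ring
      have huveq : u = v := mul_left_cancel₀ hσne (hcu.symm.trans hcu2)
      rw [← huveq] at huv
      have hu0 : u = 0 := by linear_combination huv / 2
      have hv0 : v = 0 := huveq ▸ hu0
      have hpz : (Polynomial.aeval z p : ℂ) = 0 := by
        rw [hdecp z, aeval_Epart_decomp p z, ← hu, ← hv, hu0, hv0]
        ring
      have := hp z hpz
      rw [← heq] at this
      exact lt_irrefl 0 this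
    · -- z in the open right half plane
      have hpos := key_pos p h2 hb1 hp z hlt
      have hroot : (Polynomial.aeval z (E'p p) : ℂ) = -(Polynomial.aeval z (Opart p)) := by
        have := hdecq z
        rw [hz] at this
        linear_combination -this
      rw [hroot] at hpos
      simp only [neg_mul, Complex.neg_re] at hpos
      rw [Complex.mul_conj] at hpos
      have := Complex.normSq_nonneg (Polynomial.aeval z (Opart p) : ℂ)
      simp only [Complex.ofReal_re] at hpos
      linarith
  · -- easy direction: red p stable → p stable
    intro hq z hz
    by_contra hge
    push_neg at hge
    rcases eq_or_lt_of_le hge with heq | hlt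
    · -- z on the imaginary axis
      set u : ℂ := Polynomial.aeval z (E'p p) with hu
      set v : ℂ := Polynomial.aeval z (Opart p) with hv
      have hpz : u + (cRH p : ℂ) * (z * v) + v = 0 := by
        have h := hdecp z
        rw [hz, aeval_Epart_decomp p z, ← hu, ← hv] at h
        linear_combination -h
      have hcu : conj' u = σ * u := hconjE' z heq.symm
      have hcv : conj' v = -(σ * v) := hconjO z heq.symm
      have hcz : conj' z = -z := by
        apply Complex.ext <;> simp [heq.symm]
      have hpz2 : u + (cRH p : ℂ) * (z * v) - v = 0 := by
        have h := congrArg conj' hpz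
        simp only [map_add, map_mul, map_zero, hcu, hcv, hcz, Complex.conj_ofReal] at h
        have h2 : σ * (u + (cRH p : ℂ) * (z * v) - v) = 0 := by linear_combination h
        rcases mul_eq_zero.1 h2 with h3 | h3
        · exact absurd h3 hσne
        · exact h3
      have hv0 : v = 0 := by linear_combination (hpz - hpz2) / 2
      have hu0 : u = 0 := by
        rw [hv0] at hpz
        linear_combination hpz
      have hqz : (Polynomial.aeval z (red p) : ℂ) = 0 := by
        rw [hdecq z, ← hu, ← hv, hu0, hv0, add_zero]
      have := hq z hqz
      rw [← heq] at this
      exact lt_irrefl 0 this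
    · -- z in the open right half plane : use claim A for red p
      have hdq : 1 ≤ (red p).natDegree := by
        rw [natDegree_red p h2 hb1']
        omega
      have hsum_q : Opart p + E'p p = red p := by
        rw [← E'p_add_Opart p]; ring
      have hσ' : -σ = 1 ∨ -σ = -1 := by
        rcases hσ with h | h
        · right; rw [h]
        · left; rw [h]; norm_num
      have hApos := claimA (red p) (Opart p) (E'p p) hdq hq hsum_q (-σ) hσ'
        (fun w => by rw [aeval_neg_Opart p w]; ring)
        (fun w => by rw [aeval_neg_E'p p w]; ring)
        z hlt
      have hroot : (Polynomial.aeval z (Epart p) : ℂ) = -(Polynomial.aeval z (Opart p)) := by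
        have h := hdecp z
        rw [hz] at h
        linear_combination -h
      have hsplit : (Polynomial.aeval z (Epart p) : ℂ) * conj' (Polynomial.aeval z (Opart p))
          = (Polynomial.aeval z (E'p p) : ℂ) * conj' (Polynomial.aeval z (Opart p))
            + ((cRH p * Complex.normSq (Polynomial.aeval z (Opart p)) : ℝ) : ℂ) * z := by
        rw [aeval_Epart_decomp p z, add_mul]
        congr 1
        have h := Complex.mul_conj (Polynomial.aeval z (Opart p) : ℂ)
        push_cast
        calc (cRH p : ℂ) * (z * (Polynomial.aeval z (Opart p) : ℂ))
              * conj' (Polynomial.aeval z (Opart p))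
            = (cRH p : ℂ) * ((Polynomial.aeval z (Opart p) : ℂ)
              * conj' (Polynomial.aeval z (Opart p))) * z := by ring
          _ = (cRH p : ℂ) * ((Complex.normSq (Polynomial.aeval z (Opart p)) : ℝ) : ℂ) * z := by
              rw [h]
          _ = _ := by push_cast; ring
      have hlhs : ((Polynomial.aeval z (Epart p) : ℂ) * conj' (Polynomial.aeval z (Opart p))).re
          = -Complex.normSq (Polynomial.aeval z (Opart p)) := by
        rw [hroot]
        simp only [neg_mul, Complex.neg_re]
        rw [Complex.mul_conj]
        simp
      have hre1 : 0 < ((Polynomial.aeval z (E'p p) : ℂ)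
          * conj' (Polynomial.aeval z (Opart p))).re := by
        rw [re_mul_conj_comm]
        exact hApos
      have hre2 : 0 ≤ (((cRH p * Complex.normSq (Polynomial.aeval z (Opart p)) : ℝ) : ℂ) * z).re := by
        rw [Complex.re_ofReal_mul]
        apply mul_nonneg _ (le_of_lt hlt)
        exact mul_nonneg (le_of_lt hc) (Complex.normSq_nonneg _)
      have := congrArg Complex.re hsplit
      rw [hlhs, Complex.add_re] at this
      have hnsq := Complex.normSq_nonneg (Polynomial.aeval z (Opart p) : ℂ)
      linarith

end RH

namespace RH
open Complex Polynomial
local notation "conj'" => starRingEnd ℂ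

lemma multiset_sum_re_neg (s : Multiset ℂ) (h : ∀ r ∈ s, r.re < 0) (hc : 0 < Multiset.card s) :
    (s.sum).re < 0 := by
  induction s using Multiset.induction with
  | empty => simp at hc
  | cons a t ih =>
    rw [Multiset.sum_cons, Complex.add_re]
    have ha : a.re < 0 := h a (Multiset.mem_cons_self a t)
    rcases Nat.eq_zero_or_pos (Multiset.card t) with h0 | h0
    · rw [Multiset.card_eq_zero.1 h0]
      simpa using ha
    · have := ih (fun r hr => h r (Multiset.mem_cons_of_mem hr)) h0
      linarith

lemma coeff_pred_pos (p : ℝ[X]) (h1 : 1 ≤ p.natDegree) (hb0 : 0 < p.coeff p.natDegree)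
    (hst : ∀ z : ℂ, Polynomial.aeval z p = 0 → z.re < 0) :
    0 < p.coeff (p.natDegree - 1) := by
  set n := p.natDegree with hn
  set P : ℂ[X] := p.map (algebraMap ℝ ℂ) with hP
  have hp0 : p ≠ 0 := fun h => by rw [h] at hb0; simp at hb0
  have hP0 : P ≠ 0 := by
    simp only [hP, ne_eq, Polynomial.map_eq_zero_iff (algebraMap ℝ ℂ).injective]
    exact hp0
  have hPdeg : P.natDegree = n := p.natDegree_map_eq_of_injective (algebraMap ℝ ℂ).injective
  have hb0C : ((p.coeff n : ℝ) : ℂ) ≠ 0 := by exact_mod_cast ne_of_gt hb0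
  set M : ℂ[X] := C (((p.coeff n : ℝ) : ℂ)⁻¹) * P with hM
  have hMlead : M.leadingCoeff = 1 := by
    rw [hM, Polynomial.leadingCoeff_mul, Polynomial.leadingCoeff_C, Polynomial.leadingCoeff,
      hPdeg, hP, Polynomial.coeff_map]
    field_simp
    rfl
  have hMmonic : M.Monic := hMlead
  have hMdeg : M.natDegree = n := by
    rw [hM, Polynomial.natDegree_C_mul (by simpa using hb0C), hPdeg]
  have hMroots : M.roots = P.roots := Polynomial.roots_C_mul P (by simpa using hb0C)
  have hsum := (IsAlgClosed.splits M).nextCoeff_eq_neg_sum_roots_of_monic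
    hMmonic
  have hcard : Multiset.card M.roots = n := by
    rw [Polynomial.splits_iff_card_roots.1 (IsAlgClosed.splits M), hMdeg]
  have hrootsneg : ∀ r ∈ M.roots, r.re < 0 := by
    rw [hMroots]
    exact roots_re_neg p hst
  have hsumre : (M.roots.sum).re < 0 :=
    multiset_sum_re_neg M.roots hrootsneg (by omega)
  have hnext : M.nextCoeff = ((p.coeff n : ℝ) : ℂ)⁻¹ * ((p.coeff (n-1) : ℝ) : ℂ) := by
    rw [Polynomial.nextCoeff_of_natDegree_pos (by omega), hMdeg, hM,
      Polynomial.coeff_C_mul, hP, Polynomial.coeff_map]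
    rfl
  rw [hnext] at hsum
  have hre : (((p.coeff n : ℝ) : ℂ)⁻¹ * ((p.coeff (n-1) : ℝ) : ℂ)).re
      = (p.coeff n)⁻¹ * p.coeff (n-1) := by
    push_cast
    rw [show (((p.coeff n : ℝ) : ℂ))⁻¹ * ((p.coeff (n-1) : ℝ) : ℂ)
      = (((p.coeff n)⁻¹ * p.coeff (n-1) : ℝ) : ℂ) by push_cast; ring]
    exact Complex.ofReal_re _
  have : 0 < (p.coeff n)⁻¹ * p.coeff (n-1) := by
    rw [← hre, hsum]
    simp only [Complex.neg_re]
    linarith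
  have hbinv : 0 < (p.coeff n)⁻¹ := inv_pos.2 hb0
  nlinarith

lemma hurwitzDet_one (p : ℝ[X]) (h1 : 1 ≤ p.natDegree) :
    hurwitzDet p 1 = p.coeff (p.natDegree - 1) := by
  rw [hurwitzDet_eq]
  rw [Matrix.det_fin_one]
  show bZ p (2 * ((0 : Fin 1) : ℤ) - ((0 : Fin 1) : ℤ) + 1) = _
  norm_num
  unfold bZ cZ
  rw [if_pos (by omega)]
  congr 1
  omega

lemma base_case (p : ℝ[X]) (hdeg : p.natDegree = 1) (hb0 : 0 < p.leadingCoeff) :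
    (∀ z : ℂ, Polynomial.aeval z p = 0 → z.re < 0) ↔
      (∀ k : ℕ, 1 ≤ k → k ≤ 1 → 0 < hurwitzDet p k) := by
  have hD1 : hurwitzDet p 1 = p.coeff 0 := by
    rw [hurwitzDet_one p (by omega), hdeg]
  set a : ℝ := p.coeff 1 with ha
  set b : ℝ := p.coeff 0 with hb
  have hapos : 0 < a := by
    have : p.leadingCoeff = p.coeff 1 := by rw [Polynomial.leadingCoeff, hdeg]
    rw [ha, ← this]
    exact hb0
  have hane : (a : ℂ) ≠ 0 := by exact_mod_cast ne_of_gt hapos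
  have hrep : p = C a * X + C b :=
    Polynomial.eq_X_add_C_of_degree_le_one
      (le_trans Polynomial.degree_le_natDegree (by rw [hdeg]; norm_num))
  have hev : ∀ z : ℂ, (Polynomial.aeval z p : ℂ) = (a:ℂ) * z + (b:ℂ) := by
    intro z
    conv_lhs => rw [hrep]
    simp [Polynomial.aeval_C, Algebra.algebraMap_eq_smul_one, Complex.real_smul]
  constructor
  · intro hst k hk1 hk2
    have hk : k = 1 := by omega
    subst hk
    rw [hD1]
    have hroot : (Polynomial.aeval ((-(b/a) : ℝ) : ℂ) p : ℂ) = 0 := by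
      rw [hev]
      push_cast
      field_simp
      ring
    have := hst _ hroot
    rw [Complex.ofReal_re] at this
    have : 0 < b / a := by linarith
    calc (0:ℝ) < b/a * a := by positivity
      _ = b := by field_simp
  · intro hpos z hz
    have hb' : 0 < b := by
      have := hpos 1 (le_refl 1) (le_refl 1)
      rwa [hD1] at this
    rw [hev z] at hz
    have hzval : z = ((-(b/a) : ℝ) : ℂ) := by
      push_cast
      field_simp at hz ⊢
      linear_combination hz
    rw [hzval, Complex.ofReal_re]
    have : 0 < b / a := by positivity
    linarith

end RH

namespace RH
open Polynomial

lemma cZ_red (p : ℝ[X]) (h2 : 2 ≤ p.natDegree) (hb1 : p.coeff (p.natDegree - 1) ≠ 0)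
    (j : ℤ) : cZ (red p) j
      = cZ p j - cRH p * (if Even ((p.natDegree : ℤ) - j) then cZ p (j-1) else 0) := by
  set n := p.natDegree with hn
  rcases lt_trichotomy j 0 with hj | hj | hj
  · rw [cZ_neg _ hj, cZ_neg _ hj, cZ_neg _ (by omega)]
    simp
  · subst hj
    have e1 : cZ (red p) 0 = (red p).coeff 0 := by
      unfold cZ; rw [if_pos le_rfl]; rfl
    have e2 : cZ p 0 = p.coeff 0 := by
      unfold cZ; rw [if_pos le_rfl]; rfl
    rw [e1, e2, cZ_neg _ (by omega), coeff_red, coeff_XOpart]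
    simp
  · obtain ⟨k, rfl⟩ : ∃ k : ℕ, j = (k : ℤ) + 1 := ⟨(j-1).toNat, by omega⟩
    have ht1 : ((k:ℤ)+1).toNat = k+1 := by omega
    have ht2 : ((k:ℤ)+1-1).toNat = k := by omega
    have h1 : cZ (red p) ((k:ℤ)+1) = (red p).coeff (k+1) := by
      unfold cZ
      rw [if_pos (by omega), ht1]
    have h2' : cZ p ((k:ℤ)+1) = p.coeff (k+1) := by
      unfold cZ
      rw [if_pos (by omega), ht1]
    have h3 : cZ p ((k:ℤ)+1-1) = p.coeff k := by
      unfold cZ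
      rw [if_pos (by omega), ht2]
    rw [h1, h2', h3, coeff_red, coeff_XOpart, if_neg (by omega)]
    simp only [Nat.add_sub_cancel]
    rw [coeff_Opart]
    have hiff : Odd (n + k) ↔ Even ((n:ℤ) - ((k:ℤ)+1)) := by
      rw [Nat.odd_iff, Int.even_iff]
      omega
    by_cases hpar : Odd (n + k)
    · rw [if_pos hpar, if_pos (hiff.1 hpar)]
    · rw [if_neg hpar, if_neg (fun hc => hpar (hiff.2 hc))]

end RH

namespace RH
open Polynomial

lemma bZ_red (p : ℝ[X]) (h2 : 2 ≤ p.natDegree) (hb1 : p.coeff (p.natDegree - 1) ≠ 0)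
    (m : ℤ) : bZ (red p) m = bZ p (m+1) - cRH p * (if Odd m then bZ p (m+2) else 0) := by
  unfold bZ
  have hdeg : (((red p).natDegree : ℕ) : ℤ) = (p.natDegree : ℤ) - 1 := by
    rw [natDegree_red p h2 hb1, Nat.cast_sub (by omega)]
    norm_num
  rw [hdeg, cZ_red p h2 hb1]
  have hiff : Even ((p.natDegree:ℤ) - ((p.natDegree:ℤ) - 1 - m)) ↔ Odd m := by
    rw [Int.even_iff, Int.odd_iff]
    omega
  by_cases hm : Odd m
  · rw [if_pos (hiff.2 hm), if_pos hm]
    rw [show (p.natDegree:ℤ) - 1 - m = (p.natDegree:ℤ) - (m+1) from by ring,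
      show (p.natDegree:ℤ) - (m+1) - 1 = (p.natDegree:ℤ) - (m+2) from by ring]
  · rw [if_neg (fun h => hm (hiff.1 h)), if_neg hm]
    rw [show (p.natDegree:ℤ) - 1 - m = (p.natDegree:ℤ) - (m+1) from by ring]

lemma hurwitzDet_red (p : ℝ[X]) (h2 : 2 ≤ p.natDegree) (hb1 : p.coeff (p.natDegree - 1) ≠ 0)
    (k : ℕ) : hurwitzDet p (k+1) = p.coeff (p.natDegree - 1) * hurwitzDet (red p) k := by
  rw [hurwitzDet_eq, hurwitzDet_eq]
  set n := p.natDegree with hn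
  set c := cRH p with hc
  set H : Matrix (Fin (k+1)) (Fin (k+1)) ℝ :=
    Matrix.of fun i j => bZ p (2*(j:ℤ) - (i:ℤ) + 1) with hH
  set L : Matrix (Fin (k+1)) (Fin (k+1)) ℝ := Matrix.of fun i j =>
    if i = j then 1 else if Odd (i:ℕ) ∧ (j:ℕ) + 1 = (i:ℕ) then -c else 0 with hL
  have hLsplit : ∀ i l : Fin (k+1), L i l
      = (if i = l then 1 else 0) + (if Odd (i:ℕ) ∧ (l:ℕ) + 1 = (i:ℕ) then -c else 0) := by
    intro i l
    rw [hL]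
    simp only [Matrix.of_apply]
    by_cases hil : i = l
    · subst hil
      rw [if_pos rfl, if_pos rfl, if_neg (fun h => by omega)]
      norm_num
    · rw [if_neg hil, if_neg hil, zero_add]
  have hMentry : ∀ i j : Fin (k+1), (L * H) i j = bZ (red p) (2*(j:ℤ) - (i:ℤ)) := by
    intro i j
    rw [Matrix.mul_apply]
    have hterm : ∀ l : Fin (k+1), L i l * H l j
        = (if i = l then H l j else 0)
          + (if Odd (i:ℕ) ∧ (l:ℕ) + 1 = (i:ℕ) then -c * H l j else 0) := by
      intro l
      rw [hLsplit i l, add_mul]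
      congr 1
      · by_cases h : i = l <;> simp [h]
      · by_cases h : Odd (i:ℕ) ∧ (l:ℕ) + 1 = (i:ℕ) <;> simp [h]
    rw [Finset.sum_congr rfl (fun l _ => hterm l), Finset.sum_add_distrib,
      Finset.sum_ite_eq Finset.univ i (fun l => H l j), if_pos (Finset.mem_univ i)]
    by_cases hOdd : Odd (i:ℕ)
    · have hi1 : 1 ≤ (i:ℕ) := by
        rcases Nat.eq_zero_or_pos (i:ℕ) with h | h
        · rw [h] at hOdd; simp at hOdd
        · exact h
      set i' : Fin (k+1) := ⟨(i:ℕ)-1, by omega⟩ with hi'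
      have hcond : ∀ l : Fin (k+1), (Odd (i:ℕ) ∧ (l:ℕ) + 1 = (i:ℕ)) ↔ l = i' := by
        intro l
        constructor
        · rintro ⟨-, h⟩
          apply Fin.ext
          rw [hi']
          simp only
          omega
        · rintro rfl
          refine ⟨hOdd, ?_⟩
          rw [hi']
          simp only
          omega
      rw [Finset.sum_congr rfl (fun l _ => if_congr (hcond l) rfl rfl),
        Finset.sum_ite_eq' Finset.univ i' (fun l => -c * H l j), if_pos (Finset.mem_univ _)]
      rw [hH]
      simp only [Matrix.of_apply]
      rw [bZ_red p h2 hb1 (2*(j:ℤ) - (i:ℤ))]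
      have hm : Odd (2*(j:ℤ) - (i:ℤ)) := by
        rw [Int.odd_iff]
        rw [Nat.odd_iff] at hOdd
        omega
      rw [if_pos hm]
      have e2 : ((i' : Fin (k+1)) : ℤ) = (i:ℤ) - 1 := by
        rw [hi']
        simp only
        omega
      rw [show 2*(j:ℤ) - ((i' : Fin (k+1)) : ℤ) + 1 = 2*(j:ℤ) - ((i:ℤ) - 1) + 1 from by rw [e2]]
      rw [show 2*(j:ℤ) - ((i:ℤ) - 1) + 1 = 2*(j:ℤ) - (i:ℤ) + 2 from by ring]
      ring
    · rw [Finset.sum_congr rfl (fun l _ => if_neg (fun h => hOdd h.1)),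
        Finset.sum_const_zero, add_zero]
      rw [hH]
      simp only [Matrix.of_apply]
      rw [bZ_red p h2 hb1 (2*(j:ℤ) - (i:ℤ))]
      have hm : ¬ Odd (2*(j:ℤ) - (i:ℤ)) := by
        rw [Int.odd_iff]
        rw [Nat.odd_iff] at hOdd
        omega
      rw [if_neg hm]
      ring
  have hdetL : L.det = 1 := by
    have htri : L.BlockTriangular OrderDual.toDual := by
      intro a b hab
      have hab' : (a:ℕ) < (b:ℕ) := hab
      rw [hL]
      simp only [Matrix.of_apply]
      rw [if_neg (fun h => by rw [h] at hab'; omega), if_neg (fun h => by omega)]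
    rw [Matrix.det_of_lowerTriangular L htri]
    apply Finset.prod_eq_one
    intro i _
    rw [hL]
    simp
  have hdetM : (L * H).det = H.det := by rw [Matrix.det_mul, hdetL, one_mul]
  rw [← hdetM, Matrix.det_succ_column_zero]
  rw [Finset.sum_eq_single (0 : Fin (k+1))]
  · rw [hMentry 0 0]
    have h00 : bZ (red p) (2*((0:Fin (k+1)):ℤ) - ((0:Fin (k+1)):ℤ)) = p.coeff (n - 1) := by
      norm_num
      unfold bZ cZ
      rw [if_pos (by omega), natDegree_red p h2 hb1, sub_zero, Int.toNat_natCast,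
        coeff_red_pred p h2]
    rw [show (2*((0:Fin (k+1)):ℤ) - ((0:Fin (k+1)):ℤ)) = 0 from by norm_num] at h00
    rw [show (2*((0:Fin (k+1)):ℤ) - ((0:Fin (k+1)):ℤ)) = 0 from by norm_num, h00]
    have hsub : ((L * H).submatrix (Fin.succAbove 0) Fin.succ)
        = Matrix.of (fun i j : Fin k => bZ (red p) (2*(j:ℤ) - (i:ℤ) + 1)) := by
      ext r s
      rw [Matrix.submatrix_apply, Fin.succAbove_zero, hMentry]
      simp only [Matrix.of_apply]
      congr 1
      simp only [Fin.val_succ]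
      push_cast
      ring
    rw [hsub]
    norm_num
  · intro i _ hi
    rw [hMentry i 0]
    have hz : bZ (red p) (2*((0:Fin (k+1)):ℤ) - (i:ℤ)) = 0 := by
      unfold bZ
      apply cZ_gt
      have hi1 : 1 ≤ (i:ℕ) := by
        rcases Nat.eq_zero_or_pos (i:ℕ) with h | h
        · exact absurd (Fin.ext h : i = 0) hi
        · exact h
      norm_num
      have h0 : ((0:Fin (k+1)):ℕ) = 0 := rfl
      omega
    rw [hz]
    ring
  · intro h
    exact absurd (Finset.mem_univ _) h

end RH

namespace RH
open Polynomial

lemma hurwitzDet_zero (p : ℝ[X]) : hurwitzDet p 0 = 1 := by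
  unfold hurwitzDet
  exact Matrix.det_fin_zero

end RH

open Polynomial in
/-- **Routh–Hurwitz criterion.** For a real polynomial of degree `n ≥ 1` with
positive leading coefficient, every complex root has negative real part iff
all the Hurwitz determinants `Δ_1, …, Δ_n` are positive. -/
theorem routh_hurwitz_criterion
    (n : ℕ) (hn : 1 ≤ n) (p : Polynomial ℝ)
    (hdeg : p.degree = n) (hlead : 0 < p.leadingCoeff) :
    (∀ z : ℂ, Polynomial.aeval z p = 0 → z.re < 0) ↔
      (∀ k : ℕ, 1 ≤ k → k ≤ n → 0 < hurwitzDet p k) := by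
  revert hn
  revert p
  induction n using Nat.strong_induction_on with
  | _ n IH =>
  intro p hdeg hlead hn
  rcases n with _ | n
  · omega
  rcases n with _ | m
  · -- base case n = 1
    have hnat : p.natDegree = 1 := Polynomial.natDegree_eq_of_degree_eq_some hdeg
    exact RH.base_case p hnat hlead
  · -- inductive step, degree m + 2
    have hnat : p.natDegree = m + 2 := Polynomial.natDegree_eq_of_degree_eq_some hdeg
    have h2 : 2 ≤ p.natDegree := by omega
    have hb0 : 0 < p.coeff p.natDegree := by
      rw [Polynomial.coeff_natDegree]
      exact hlead
    by_cases hb1 : 0 < p.coeff (p.natDegree - 1)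
    · have hb1' : p.coeff (p.natDegree - 1) ≠ 0 := ne_of_gt hb1
      set q : ℝ[X] := RH.red p with hq
      have hqnat : q.natDegree = m + 1 := by
        rw [hq, RH.natDegree_red p h2 hb1', hnat]
        omega
      have hq0 : q ≠ 0 := RH.red_ne_zero p h2 hb1'
      have hqdeg : q.degree = ((m + 1 : ℕ) : WithBot ℕ) := by
        rw [Polynomial.degree_eq_natDegree hq0, hqnat]
      have hqlead : 0 < q.leadingCoeff := by
        rw [Polynomial.leadingCoeff, hqnat, hq]
        have : m + 1 = p.natDegree - 1 := by omega
        rw [this, RH.coeff_red_pred p h2]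
        exact hb1
      have hIH := IH (m+1) (by omega) q hqdeg hqlead (by omega)
      have hstab := RH.reduction_stable_iff p h2 hb0 hb1
      have hrec : ∀ k : ℕ, hurwitzDet p (k+1)
          = p.coeff (p.natDegree - 1) * hurwitzDet q k :=
        fun k => RH.hurwitzDet_red p h2 hb1' k
      rw [hstab, hIH]
      constructor
      · intro h k hk1 hk2
        obtain ⟨k', rfl⟩ : ∃ k', k = k'+1 := ⟨k-1, by omega⟩
        rw [hrec k']
        rcases Nat.eq_zero_or_pos k' with h0 | h0
        · subst h0
          rw [RH.hurwitzDet_zero]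
          simpa using hb1
        · exact mul_pos hb1 (h k' h0 (by omega))
      · intro h k hk1 hk2
        have hk := h (k+1) (by omega) (by omega)
        rw [hrec k] at hk
        by_contra hle
        push_neg at hle
        nlinarith
    · apply iff_of_false
      · intro hst
        exact hb1 (RH.coeff_pred_pos p (by omega) hb0 hst)
      · intro hpos
        have h1 := hpos 1 le_rfl (by omega)
        rw [RH.hurwitzDet_one p (by omega)] at h1
        exact hb1 h1
end

section
/- Let p(z) = b₀zⁿ + ⋯ + b_n be a real polynomial of degree n, and define the reflected polynomial p̃(z) := (−1)ⁿ p(−z), whose coefficients are b̃_k = (−1)^k b_k for k = 0, 1, …, n. Then for every k = 1, …, n the Hurwitz determinants of p̃ and p satisfy Δ̃_k = (−1)^{⌈k/2⌉} Δ_k, where ⌈k/2⌉ denotes the least integer greater than or equal to k/2. -/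
open Polynomial in
lemma coeff_comp_neg_X_aux (p : Polynomial ℝ) (t : ℕ) :
    (p.comp (-X)).coeff t = (-1) ^ t * p.coeff t := by
  induction p using Polynomial.induction_on' with
  | add p q hp hq => simp [Polynomial.add_comp, hp, hq, mul_add]
  | monomial i a =>
    rw [Polynomial.monomial_comp, neg_pow]
    have : ((-1 : Polynomial ℝ)) ^ i = Polynomial.C ((-1 : ℝ) ^ i) := by
      simp [map_pow]
    rw [this, ← mul_assoc, ← Polynomial.C_mul, Polynomial.coeff_C_mul,
      Polynomial.coeff_X_pow, Polynomial.coeff_monomial]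
    split_ifs with h1 h2 h2
    · subst h1; ring
    · omega
    · omega
    · ring

lemma prod_sign_aux (k : ℕ) :
    (∏ i : Fin k, (-1 : ℝ) ^ ((i : ℕ) + 1)) = (-1) ^ ((k + 1) / 2) := by
  induction k with
  | zero => simp
  | succ k ih =>
    rw [Fin.prod_univ_castSucc]
    simp only [Fin.coe_castSucc, Fin.val_last]
    rw [ih, ← pow_add, neg_one_pow_eq_pow_mod_two,
      neg_one_pow_eq_pow_mod_two (n := (k + 1 + 1) / 2)]
    congr 1
    rcases Nat.even_or_odd k with ⟨m, hm⟩ | ⟨m, hm⟩ <;> subst hm <;> omega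

/-- For a real polynomial `p` of degree `n`, the reflected polynomial
`p̃(z) = (-1)^n p(-z)` has coefficients `b̃_k = (-1)^k b_k`, and its Hurwitz
determinants satisfy `Δ̃_k = (-1)^⌈k/2⌉ Δ_k` for `k = 1, …, n`. -/
theorem hurwitzDet_reflected
    (n : ℕ) (p q : Polynomial ℝ) (hdeg : p.degree = n)
    (hq : q = Polynomial.C ((-1) ^ n) * p.comp (-Polynomial.X)) :
    (∀ k : ℕ, k ≤ n → q.coeff (n - k) = (-1) ^ k * p.coeff (n - k)) ∧
      ∀ k : ℕ, 1 ≤ k → k ≤ n →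
        hurwitzDet q k = (-1) ^ ((k + 1) / 2) * hurwitzDet p k := by
  have hn : p.natDegree = n := Polynomial.natDegree_eq_of_degree_eq_some hdeg
  have hp0 : p ≠ 0 := fun h => by simp [h] at hdeg
  have hqc : ∀ t : ℕ, q.coeff t = (-1) ^ (n + t) * p.coeff t := by
    intro t
    rw [hq, Polynomial.coeff_C_mul, coeff_comp_neg_X_aux, ← mul_assoc, ← pow_add]
  -- the reflected coefficients
  have part1 : ∀ k : ℕ, k ≤ n → q.coeff (n - k) = (-1) ^ k * p.coeff (n - k) := by
    intro k hk
    rw [hqc, neg_one_pow_eq_pow_mod_two, neg_one_pow_eq_pow_mod_two (n := k)]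
    congr 2
    omega
  refine ⟨part1, ?_⟩
  -- degree of q
  have hqn : q.natDegree = n := by
    have hle : q.natDegree ≤ n := by
      rw [hq]
      refine le_trans (Polynomial.natDegree_C_mul_le _ _) ?_
      refine le_trans Polynomial.natDegree_comp_le ?_
      simp [hn]
    have hne : q.coeff n ≠ 0 := by
      rw [hqc]
      have : p.coeff n ≠ 0 := by
        rw [← hn]
        exact Polynomial.leadingCoeff_ne_zero.mpr hp0
      exact mul_ne_zero (pow_ne_zero _ (by norm_num)) this
    exact le_antisymm hle (Polynomial.le_natDegree_of_ne_zero hne)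
  intro k _ _
  unfold hurwitzDet
  rw [hqn, hn]
  have key : (Matrix.of fun i j : Fin k =>
      if 0 ≤ 2 * (j : ℤ) - (i : ℤ) + 1 ∧ 2 * (j : ℤ) - (i : ℤ) + 1 ≤ (n : ℤ)
      then q.coeff (n - (2 * (j : ℤ) - (i : ℤ) + 1).toNat)
      else 0) =
      Matrix.of fun i j : Fin k => (-1 : ℝ) ^ ((i : ℕ) + 1) *
        (if 0 ≤ 2 * (j : ℤ) - (i : ℤ) + 1 ∧ 2 * (j : ℤ) - (i : ℤ) + 1 ≤ (n : ℤ)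
        then p.coeff (n - (2 * (j : ℤ) - (i : ℤ) + 1).toNat)
        else 0) := by
    ext i j
    simp only [Matrix.of_apply]
    split_ifs with h
    · rw [hqc]
      have hm : ((2 * (j : ℤ) - (i : ℤ) + 1).toNat : ℤ) = 2 * (j : ℤ) - (i : ℤ) + 1 :=
        Int.toNat_of_nonneg h.1
      have hmn : (2 * (j : ℤ) - (i : ℤ) + 1).toNat ≤ n := by omega
      rw [neg_one_pow_eq_pow_mod_two, neg_one_pow_eq_pow_mod_two (n := (i : ℕ) + 1)]
      congr 2
      omega
    · ring
  rw [key]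
  exact (Matrix.det_mul_column _ _).trans (by rw [prod_sign_aux]; rfl)
end

section
/- (Characterization of positive operators) Let A be an n×n Hermitian complex matrix with characteristic polynomial p_A(z) = det(zI − A) = b₀zⁿ + b₁z^{n−1} + ⋯ + b_n (whose coefficients are real), and let n₀ ∈ {0, 1, …, n} be the multiplicity of the number zero as a root of p_A. Then A is positive semidefinite if and only if the Hurwitz determinants of p_A satisfy (−1)^{⌈k/2⌉} Δ_k > 0 for all k = 1, 2, …, n−n₀, where ⌈k/2⌉ is the least integer greater than or equal to k/2. -/
open ComplexOrder

namespace HurwitzAux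

open Polynomial Matrix Finset


/-- Generic Hurwitz-type determinant of a two-sided sequence. -/
noncomputable def HD (b : ℤ → ℝ) (k : ℕ) : ℝ :=
  Matrix.det (Matrix.of fun i j : Fin k => b (2 * (j : ℤ) - (i : ℤ) + 1))

/-- Elementary symmetric "sequence" of a list: `esymmSeq l t = e_t(l)`. -/
noncomputable def esymmSeq : List ℝ → ℤ → ℝ
  | [], t => if t = 0 then 1 else 0
  | a :: l, t => esymmSeq l t + a * esymmSeq l (t - 1)

lemma esymmSeq_neg (l : List ℝ) : ∀ t : ℤ, t < 0 → esymmSeq l t = 0 := by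
  induction l with
  | nil => intro t ht; simp only [esymmSeq, if_neg (by omega : ¬ t = 0)]
  | cons a l ih =>
      intro t ht
      simp only [esymmSeq, ih t ht, ih (t - 1) (by omega), mul_zero, add_zero]

lemma esymmSeq_gt (l : List ℝ) : ∀ t : ℤ, (l.length : ℤ) < t → esymmSeq l t = 0 := by
  induction l with
  | nil => intro t ht; simp only [List.length_nil] at ht; simp only [esymmSeq, if_neg (by omega : ¬ t = 0)]
  | cons a l ih =>
      intro t ht
      simp only [List.length_cons] at ht
      push_cast at ht
      simp only [esymmSeq, ih t (by omega), ih (t - 1) (by omega), mul_zero, add_zero]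

lemma esymmSeq_zero (l : List ℝ) : esymmSeq l 0 = 1 := by
  induction l with
  | nil => simp [esymmSeq]
  | cons a l ih => simp [esymmSeq, ih, esymmSeq_neg l (-1) (by omega)]

/-- Expansion of a determinant whose rows each split as a sum. -/
lemma det_rows_add {k : ℕ} (f g : Fin k → Fin k → ℝ) :
    Matrix.det (Matrix.of fun i j => f i j + g i j) =
      ∑ s : Finset (Fin k),
        Matrix.det (Matrix.of fun i j => if i ∈ s then f i j else g i j) := by
  classical
  have h := (Matrix.detRowAlternating :
      (Fin k → ℝ) [⋀^Fin k]→ₗ[ℝ] ℝ).toMultilinearMap.map_add_univ f g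
  have hsp : ∀ s : Finset (Fin k), s.piecewise f g = fun i j => if i ∈ s then f i j else g i j := by
    intro s; funext i j; by_cases hi : i ∈ s <;> simp [Finset.piecewise, hi]
  calc (Matrix.of fun i j => f i j + g i j).det
      = Matrix.detRowAlternating (f + g) := rfl
    _ = ∑ s : Finset (Fin k), Matrix.detRowAlternating (s.piecewise f g) := h
    _ = _ := by
        refine Finset.sum_congr rfl fun s _ => ?_
        rw [hsp s]; rfl




/-- The matrix with entries `e_{2(j+1) - S i}` of the list `l`. -/
noncomputable def EMat (l : List ℝ) {k : ℕ} (S : Fin k → ℤ) : Matrix (Fin k) (Fin k) ℝ :=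
  Matrix.of fun i j => esymmSeq l (2 * (j : ℤ) + 2 - S i)

lemma strictMono_fin_id {k : ℕ} (c : Fin k → Fin k) (hc : StrictMono c) : ∀ i, c i = i := by
  have hsurj : Function.Surjective c :=
    Finite.surjective_of_injective hc.injective
  have : c = id := hc.eq_id
  intro i; rw [this]; rfl

lemma EMat_nil_det {k : ℕ} (S : Fin k → ℤ) (hS : StrictMono S) :
    (EMat [] S).det = if ∀ i : Fin k, S i = 2 * (i : ℤ) + 2 then 1 else 0 := by
  classical
  split_ifs with h
  · have : EMat [] S = 1 := by
      ext i j
      simp only [EMat, esymmSeq, Matrix.of_apply, h i, Matrix.one_apply]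
      by_cases hij : i = j
      · subst hij; simp
      · have hij' : (i : ℤ) ≠ (j : ℤ) := by
          simpa [Fin.val_injective.ne_iff] using fun hh : (i:ℕ) = (j:ℕ) => hij (Fin.ext hh)
        rw [if_neg (by omega), if_neg hij]
    rw [this, Matrix.det_one]
  · push_neg at h
    obtain ⟨i₀, hi₀⟩ := h
    by_cases hrow : ∃ i : Fin k, ∀ j : Fin k, EMat [] S i j = 0
    · obtain ⟨i, hi⟩ := hrow
      exact Matrix.det_eq_zero_of_row_eq_zero i hi
    · exfalso
      push_neg at hrow
      have hc : ∀ i : Fin k, ∃ j : Fin k, S i = 2 * (j : ℤ) + 2 := by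
        intro i
        obtain ⟨j, hj⟩ := hrow i
        refine ⟨j, ?_⟩
        by_contra hne
        exact hj (by simp only [EMat, esymmSeq, Matrix.of_apply]; rw [if_neg (by omega)])
      choose c hcs using hc
      have hmono : StrictMono c := by
        intro i i' hii'
        have h1 := hcs i; have h2 := hcs i'
        have := hS hii'
        have : (c i : ℤ) < (c i' : ℤ) := by omega
        exact_mod_cast this
      exact hi₀ (by rw [hcs i₀, strictMono_fin_id c hmono i₀])







lemma EMat_cons (a : ℝ) (l : List ℝ) {k : ℕ} (S : Fin k → ℤ) :
    EMat (a :: l) S = Matrix.of fun (i j : Fin k) =>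
      esymmSeq l (2 * (j : ℤ) + 2 - S i) + a * esymmSeq l (2 * (j : ℤ) + 2 - (S i + 1)) := by
  ext i j
  simp only [EMat, Matrix.of_apply, esymmSeq]
  rw [show (2 * (j:ℤ) + 2 - (S i + 1)) = (2 * (j:ℤ) + 2 - S i) - 1 by ring]

lemma term_eq (a : ℝ) (l : List ℝ) {k : ℕ} (S : Fin k → ℤ) (s : Finset (Fin k)) :
    (Matrix.of fun i j : Fin k => if i ∈ s then esymmSeq l (2 * (j:ℤ) + 2 - S i)
        else a * esymmSeq l (2 * (j:ℤ) + 2 - (S i + 1))).det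
      = (∏ i, (if i ∈ s then (1:ℝ) else a)) *
          (EMat l (fun i => S i + (if i ∈ s then 0 else 1))).det := by
  rw [← Matrix.det_mul_column]
  congr 1
  ext i j
  by_cases hi : i ∈ s <;> simp [EMat, hi]

lemma EMat_row_eq {l : List ℝ} {k : ℕ} {S : Fin k → ℤ} {i i' : Fin k} (h : S i = S i') :
    EMat l S i = EMat l S i' := by
  funext j; simp [EMat, h]

lemma EMat_det_nonneg : ∀ (l : List ℝ), (∀ x ∈ l, 0 ≤ x) →
    ∀ {k : ℕ} (S : Fin k → ℤ), StrictMono S → 0 ≤ (EMat l S).det := by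
  intro l
  induction l with
  | nil =>
      intro _ k S hS
      rw [EMat_nil_det S hS]
      split_ifs <;> norm_num
  | cons a l ih =>
      intro hal k S hS
      have ha : 0 ≤ a := hal a List.mem_cons_self
      have hl : ∀ x ∈ l, 0 ≤ x := fun x hx => hal x (List.mem_cons_of_mem _ hx)
      rw [EMat_cons, det_rows_add]
      refine Finset.sum_nonneg fun s _ => ?_
      rw [term_eq]
      refine mul_nonneg (Finset.prod_nonneg fun i _ => by split_ifs with h; exacts [zero_le_one, ha]) ?_
      set S' : Fin k → ℤ := fun i => S i + (if i ∈ s then 0 else 1) with hS'def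
      have hmono : Monotone S' := by
        intro i i' hii
        rcases eq_or_lt_of_le hii with rfl | hlt
        · exact le_rfl
        · have h1 := hS hlt
          have e1 : (if i ∈ s then (0:ℤ) else 1) ≤ 1 := by split_ifs <;> omega
          have e2 : (0:ℤ) ≤ (if i' ∈ s then (0:ℤ) else 1) := by split_ifs <;> omega
          simp only [hS'def]; omega
      by_cases hinj : Function.Injective S'
      · exact ih hl S' (hmono.strictMono_of_injective hinj)
      · rw [Function.not_injective_iff] at hinj
        obtain ⟨i, i', heq, hne⟩ := hinj
        rw [Matrix.det_zero_of_row_eq hne (EMat_row_eq heq)]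

lemma EMat_det_nonneg_of_monotone (l : List ℝ) (hl : ∀ x ∈ l, 0 ≤ x) {k : ℕ}
    (S : Fin k → ℤ) (hS : Monotone S) : 0 ≤ (EMat l S).det := by
  by_cases hinj : Function.Injective S
  · exact EMat_det_nonneg l hl S (hS.strictMono_of_injective hinj)
  · rw [Function.not_injective_iff] at hinj
    obtain ⟨i, i', heq, hne⟩ := hinj
    rw [Matrix.det_zero_of_row_eq hne (EMat_row_eq heq)]

lemma EMat_det_pos : ∀ (l : List ℝ), (∀ x ∈ l, 0 < x) →
    ∀ {k : ℕ} (S : Fin k → ℤ), StrictMono S →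
    (∀ i : Fin k, S i ≤ 2 * (i : ℤ) + 2) →
    (∀ i : Fin k, 2 * (i : ℤ) + 2 - S i ≤ (l.length : ℤ)) →
    0 < (EMat l S).det := by
  intro l
  induction l with
  | nil =>
      intro _ k S hS hub hlb
      rw [EMat_nil_det S hS, if_pos ?_]
      · norm_num
      · intro i
        have h1 := hub i; have h2 := hlb i
        simp only [List.length_nil, Nat.cast_zero] at h2
        omega
  | cons a l ih =>
      intro hal k S hS hub hlb
      have ha : 0 < a := hal a List.mem_cons_self
      have hl : ∀ x ∈ l, 0 < x := fun x hx => hal x (List.mem_cons_of_mem _ hx)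
      have hl' : ∀ x ∈ l, 0 ≤ x := fun x hx => (hl x hx).le
      rw [EMat_cons, det_rows_add]
      set sw : Finset (Fin k) := Finset.univ.filter (fun i => S i = 2 * (i:ℤ) + 2) with hsw
      have hmem : ∀ i : Fin k, i ∈ sw ↔ S i = 2 * (i:ℤ) + 2 := by
        intro i; simp [hsw]
      refine Finset.sum_pos' (fun s _ => ?_) ⟨sw, Finset.mem_univ _, ?_⟩
      · -- nonnegativity of each term
        rw [term_eq]
        refine mul_nonneg (Finset.prod_nonneg fun i _ => by
          split_ifs with h; exacts [zero_le_one, ha.le]) ?_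
        refine EMat_det_nonneg_of_monotone l hl' _ ?_
        intro i i' hii
        rcases eq_or_lt_of_le hii with rfl | hlt
        · exact le_rfl
        · have h1 := hS hlt
          have e1 : (if i ∈ s then (0:ℤ) else 1) ≤ 1 := by split_ifs <;> omega
          have e2 : (0:ℤ) ≤ (if i' ∈ s then (0:ℤ) else 1) := by split_ifs <;> omega
          dsimp only
          omega
      · -- the witness term is positive
        rw [term_eq]
        refine mul_pos (Finset.prod_pos fun i _ => by split_ifs with h; exacts [one_pos, ha]) ?_
        set S' : Fin k → ℤ := fun i => S i + (if i ∈ sw then 0 else 1) with hS'def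
        refine ih hl S' ?_ ?_ ?_
        · intro i i' hlt
          have h1 := hS hlt
          have hcst : ((i:ℕ):ℤ) < ((i':ℕ):ℤ) := by exact_mod_cast hlt
          have hu1 := hub i; have hu2 := hub i'
          simp only [hS'def]
          by_cases h2 : i' ∈ sw
          · rw [if_pos h2]
            rw [hmem] at h2
            by_cases h3 : i ∈ sw
            · rw [if_pos h3]; rw [hmem] at h3; omega
            · rw [if_neg h3]; rw [hmem] at h3
              have : S i ≠ 2 * (i:ℤ) + 2 := h3
              omega
          · rw [if_neg h2]
            have e1 : (if i ∈ sw then (0:ℤ) else 1) ≤ 1 := by split_ifs <;> omega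
            omega
        · intro i
          have hu := hub i
          simp only [hS'def]
          by_cases h3 : i ∈ sw
          · rw [if_pos h3]; rw [hmem] at h3; omega
          · rw [if_neg h3]; rw [hmem] at h3
            have : S i ≠ 2 * (i:ℤ) + 2 := h3
            omega
        · intro i
          have hlb' := hlb i
          simp only [List.length_cons, Nat.cast_succ] at hlb'
          simp only [hS'def]
          by_cases h3 : i ∈ sw
          · rw [if_pos h3]; rw [hmem] at h3; omega
          · rw [if_neg h3]; omega




noncomputable def bhat (b : ℤ → ℝ) (c : ℝ) : ℤ → ℝ := fun t =>
  if t % 2 = 0 then b (t + 1) else b (t + 1) - c * b (t + 2)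

lemma HD_succ_eq (b : ℤ → ℝ) (c : ℝ) (hneg : ∀ t : ℤ, t < 0 → b t = 0)
    (hc : b 0 = c * b 1) (k : ℕ) :
    HD b (k + 1) = b 1 * HD (bhat b c) k := by
  classical
  set Mr : ℕ → Matrix (Fin (k+1)) (Fin (k+1)) ℝ := fun r =>
    Matrix.of fun i j =>
      if (i : ℕ) < r ∧ (i : ℕ) % 2 = 1
      then b (2 * (j : ℤ) - (i : ℤ) + 1) - c * b (2 * (j : ℤ) - (i : ℤ) + 2)
      else b (2 * (j : ℤ) - (i : ℤ) + 1) with hMr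
  have hMrApp : ∀ (r : ℕ) (i j : Fin (k+1)), Mr r i j =
      if (i : ℕ) < r ∧ (i : ℕ) % 2 = 1
      then b (2 * (j : ℤ) - (i : ℤ) + 1) - c * b (2 * (j : ℤ) - (i : ℤ) + 2)
      else b (2 * (j : ℤ) - (i : ℤ) + 1) := fun r i j => rfl
  have key : ∀ r : ℕ, (Mr r).det = HD b (k + 1) := by
    intro r
    induction r with
    | zero =>
        have h0 : Mr 0 = Matrix.of fun i j : Fin (k+1) => b (2 * (j : ℤ) - (i : ℤ) + 1) := by
          ext i j
          rw [hMrApp, if_neg (by omega)]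
          rfl
        rw [h0]
        rfl
    | succ r ihr =>
        by_cases hr : r < k + 1 ∧ r % 2 = 1
        · have hr1 : 1 ≤ r := by omega
          set i0 : Fin (k+1) := ⟨r, hr.1⟩ with hi0
          set i1 : Fin (k+1) := ⟨r - 1, by omega⟩ with hi1
          have hv0 : (i0 : ℕ) = r := rfl
          have hv1 : (i1 : ℕ) = r - 1 := rfl
          have hne : i0 ≠ i1 := by
            intro h
            have := congrArg Fin.val h
            rw [hv0, hv1] at this
            omega
          have hupd : Mr (r+1) = (Mr r).updateRow i0 ((Mr r) i0 + (-c) • (Mr r) i1) := by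
            ext i j
            by_cases hi : i = i0
            · subst hi
              rw [Matrix.updateRow_self]
              simp only [Pi.add_apply, Pi.smul_apply, smul_eq_mul]
              rw [hMrApp, hMrApp, hMrApp, if_pos (by rw [hv0]; omega),
                if_neg (by rw [hv0]; omega), if_neg (by rw [hv1]; omega)]
              have hc0 : ((i0 : ℕ) : ℤ) = (r : ℤ) := by rw [hv0]
              have hc1 : ((i1 : ℕ) : ℤ) = (r : ℤ) - 1 := by rw [hv1]; omega
              rw [hc0, hc1]
              ring_nf
            · rw [Matrix.updateRow_ne hi]
              rw [hMrApp, hMrApp]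
              have hival : (i : ℕ) ≠ r := by
                intro h; exact hi (Fin.ext (by rw [h, hv0]))
              have hiff : ((i : ℕ) < r + 1 ∧ (i : ℕ) % 2 = 1) ↔ ((i : ℕ) < r ∧ (i : ℕ) % 2 = 1) := by
                omega
              simp only [hiff]
          rw [hupd, Matrix.det_updateRow_add_smul_self _ hne, ihr]
        · have heq : Mr (r+1) = Mr r := by
            ext i j
            rw [hMrApp, hMrApp]
            have hik : (i : ℕ) < k + 1 := i.isLt
            have hiff : ((i : ℕ) < r + 1 ∧ (i : ℕ) % 2 = 1) ↔ ((i : ℕ) < r ∧ (i : ℕ) % 2 = 1) := by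
              omega
            simp only [hiff]
          rw [heq, ihr]
  rw [← key (k + 1), Matrix.det_succ_column_zero]
  rw [Finset.sum_eq_single_of_mem 0 (Finset.mem_univ _)]
  · have h00 : Mr (k+1) 0 0 = b 1 := by
      rw [hMrApp, if_neg (by simp)]
      norm_num
    rw [h00]
    simp only [Fin.val_zero, pow_zero, one_mul]
    congr 1
    unfold HD
    congr 1
    ext i j
    rw [Matrix.submatrix_apply, Fin.zero_succAbove, Matrix.of_apply]
    rw [hMrApp]
    simp only [Fin.val_succ]
    push_cast
    unfold bhat
    have hilt : (i : ℕ) < k := i.isLt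
    have hizc : (((i : ℕ)) : ℤ) % 2 = ((i : ℕ) % 2 : ℕ) := by push_cast; omega
    by_cases hpar : (i : ℕ) % 2 = 0
    · rw [if_pos ⟨by omega, by omega⟩, if_neg (by omega)]
      have e1 : 2 * ((j:ℕ):ℤ) + 2 - (((i:ℕ):ℤ) + 1) + 1 = 2 * ((j:ℕ):ℤ) - ((i:ℕ):ℤ) + 1 + 1 := by ring
      have e2 : 2 * ((j:ℕ):ℤ) + 2 - (((i:ℕ):ℤ) + 1) + 2 = 2 * ((j:ℕ):ℤ) - ((i:ℕ):ℤ) + 1 + 2 := by ring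
      rw [show 2 * (((j:ℕ):ℤ) + 1) - (((i:ℕ):ℤ) + 1) + 1 = 2 * ((j:ℕ):ℤ) - ((i:ℕ):ℤ) + 1 + 1 by ring,
        show 2 * (((j:ℕ):ℤ) + 1) - (((i:ℕ):ℤ) + 1) + 2 = 2 * ((j:ℕ):ℤ) - ((i:ℕ):ℤ) + 1 + 2 by ring]
    · rw [if_neg (by omega), if_pos (by omega)]
      rw [show 2 * (((j:ℕ):ℤ) + 1) - (((i:ℕ):ℤ) + 1) + 1 = 2 * ((j:ℕ):ℤ) - ((i:ℕ):ℤ) + 1 + 1 by ring]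
  · intro i _ hi
    have hipos : 1 ≤ (i : ℕ) := by
      rcases Nat.eq_zero_or_pos (i : ℕ) with h | h
      · exact absurd (Fin.ext h) hi
      · exact h
    have hj0 : (((0 : Fin (k+1)) : ℕ) : ℤ) = 0 := by norm_num
    have hzero : Mr (k+1) i 0 = 0 := by
      rw [hMrApp]
      by_cases hodd : (i : ℕ) % 2 = 1
      · rw [if_pos ⟨i.isLt, hodd⟩]
        rcases eq_or_lt_of_le hipos with h1 | h1
        · have hv : (((i : ℕ)) : ℤ) = 1 := by omega
          rw [hj0, hv]
          norm_num
          rw [hc]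
          ring
        · rw [hneg _ (by rw [hj0]; omega), hneg _ (by rw [hj0]; omega)]
          ring
      · rw [if_neg (by omega)]
        have hi2 : 2 ≤ (i : ℕ) := by omega
        exact hneg _ (by rw [hj0]; omega)
    rw [hzero]
    ring






noncomputable def Pm (b : ℤ → ℝ) (d : ℕ) (u : ℝ) : ℝ :=
  ∑ t ∈ Finset.range (d + 1), b ((d : ℤ) - 2 * t) * u ^ t

lemma Pm_zero (b : ℤ → ℝ) (u : ℝ) : Pm b 0 u = b 0 := by
  simp [Pm]

lemma Pm_one (b : ℤ → ℝ) (hneg : ∀ t : ℤ, t < 0 → b t = 0) (u : ℝ) : Pm b 1 u = b 1 := by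
  have h := hneg (-1) (by norm_num)
  rw [Pm, Finset.sum_range_succ, Finset.sum_range_one]
  push_cast
  norm_num [h]

lemma Pm_shift (b : ℤ → ℝ) (hneg : ∀ t : ℤ, t < 0 → b t = 0) (d : ℕ) (u : ℝ) :
    Pm b (d + 2) u = b ((d : ℤ) + 2) + u * Pm b d u := by
  unfold Pm
  rw [Finset.sum_range_succ']
  have hsum : ∀ t ∈ Finset.range (d + 2), b (((d + 2 : ℕ) : ℤ) - 2 * ((t + 1 : ℕ) : ℤ)) * u ^ (t + 1)
      = u * (b ((d : ℤ) - 2 * (t : ℤ)) * u ^ t) := by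
    intro t _
    have harg : (((d + 2 : ℕ) : ℤ) - 2 * ((t + 1 : ℕ) : ℤ)) = ((d : ℤ) - 2 * (t : ℤ)) := by
      push_cast; ring
    rw [harg, pow_succ]; ring
  rw [Finset.sum_congr rfl hsum, Finset.sum_range_succ]
  rw [hneg ((d : ℤ) - 2 * ((d + 1 : ℕ) : ℤ)) (by push_cast; omega)]
  rw [zero_mul, mul_zero, add_zero, ← Finset.mul_sum]
  have hconst : b (((d + 2 : ℕ) : ℤ) - 2 * ((0 : ℕ) : ℤ)) * u ^ (0 : ℕ) = b ((d : ℤ) + 2) := by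
    norm_num
  rw [hconst, add_comm]

lemma Pm_bhat_even (b : ℤ → ℝ) (c : ℝ) (hneg : ∀ t : ℤ, t < 0 → b t = 0)
    (d : ℕ) (hd : d % 2 = 0) (u : ℝ) :
    Pm (bhat b c) d u = Pm b (d + 1) u := by
  unfold Pm
  conv_rhs => rw [Finset.sum_range_succ]
  rw [hneg (((d + 1 : ℕ) : ℤ) - 2 * ((d + 1 : ℕ) : ℤ)) (by push_cast; omega), zero_mul, add_zero]
  refine Finset.sum_congr rfl fun t ht => ?_
  unfold bhat
  rw [if_pos (by omega)]
  have harg : (d : ℤ) - 2 * (t : ℤ) + 1 = ((d + 1 : ℕ) : ℤ) - 2 * (t : ℤ) := by push_cast; ring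
  rw [harg]

lemma Pm_bhat_odd (b : ℤ → ℝ) (c : ℝ) (hneg : ∀ t : ℤ, t < 0 → b t = 0)
    (d : ℕ) (hd : d % 2 = 1) (u : ℝ) :
    Pm (bhat b c) d u = Pm b (d + 1) u - c * Pm b (d + 2) u := by
  have hstep : ∀ t ∈ Finset.range (d + 1),
      bhat b c ((d : ℤ) - 2 * t) * u ^ t
        = b (((d + 1 : ℕ) : ℤ) - 2 * t) * u ^ t - c * (b (((d + 2 : ℕ) : ℤ) - 2 * t) * u ^ t) := by
    intro t _
    unfold bhat
    rw [if_neg (by omega)]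
    have h1 : (d : ℤ) - 2 * (t : ℤ) + 1 = ((d + 1 : ℕ) : ℤ) - 2 * (t : ℤ) := by push_cast; ring
    have h2 : (d : ℤ) - 2 * (t : ℤ) + 2 = ((d + 2 : ℕ) : ℤ) - 2 * (t : ℤ) := by push_cast; ring
    rw [h1, h2]; ring
  unfold Pm
  rw [Finset.sum_congr rfl hstep, Finset.sum_sub_distrib]
  congr 1
  · -- first sum equals Pm b (d+1)
    conv_rhs => rw [Finset.sum_range_succ]
    rw [hneg (((d + 1 : ℕ) : ℤ) - 2 * ((d + 1 : ℕ) : ℤ)) (by push_cast; omega), zero_mul, add_zero]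
  · rw [← Finset.mul_sum]
    congr 1
    conv_rhs => rw [Finset.sum_range_succ, Finset.sum_range_succ]
    rw [hneg (((d + 2 : ℕ) : ℤ) - 2 * ((d + 2 : ℕ) : ℤ)) (by push_cast; omega), zero_mul, add_zero]
    rw [hneg (((d + 2 : ℕ) : ℤ) - 2 * ((d + 1 : ℕ) : ℤ)) (by push_cast; omega), zero_mul, add_zero]

lemma HD_one (b : ℤ → ℝ) : HD b 1 = b 1 := by
  unfold HD
  rw [Matrix.det_fin_one]
  norm_num

/-- The key backward induction: positivity of all Hurwitz determinants forces the
even and odd parts of the polynomial to be positive on `[0, ∞)`. -/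
lemma backward_core : ∀ (m : ℕ) (b : ℤ → ℝ), (∀ t : ℤ, t < 0 → b t = 0) →
    (∀ t : ℤ, (m : ℤ) < t → b t = 0) → 0 < b 0 →
    (∀ k : ℕ, 1 ≤ k → k ≤ m → 0 < HD b k) →
    ∀ u : ℝ, 0 ≤ u → 0 < Pm b m u ∧ (1 ≤ m → 0 < Pm b (m - 1) u) := by
  intro m
  induction m with
  | zero =>
      intro b hneg hupper hb0 _ u hu
      refine ⟨by rw [Pm_zero]; exact hb0, by omega⟩
  | succ m ih =>
      intro b hneg hupper hb0 hHD u hu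
      have hb1 : 0 < b 1 := by
        have := hHD 1 le_rfl (by omega)
        rwa [HD_one] at this
      set c : ℝ := b 0 / b 1 with hcdef
      have hc : b 0 = c * b 1 := by
        rw [hcdef, div_mul_cancel₀ _ hb1.ne']
      have hcpos : 0 < c := div_pos hb0 hb1
      have hhneg : ∀ t : ℤ, t < 0 → bhat b c t = 0 := by
        intro t ht
        unfold bhat
        by_cases hpar : t % 2 = 0
        · rw [if_pos hpar, hneg (t + 1) (by omega)]
        · rw [if_neg hpar]
          rcases eq_or_lt_of_le (show t ≤ -1 by omega) with h1 | h1
          · rw [h1]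
            norm_num
            rw [hc]
            ring
          · rw [hneg (t + 1) (by omega), hneg (t + 2) (by omega)]
            ring
      have hhupper : ∀ t : ℤ, (m : ℤ) < t → bhat b c t = 0 := by
        intro t ht
        unfold bhat
        have e1 : b (t + 1) = 0 := hupper (t + 1) (by push_cast; omega)
        have e2 : b (t + 2) = 0 := hupper (t + 2) (by push_cast; omega)
        rw [e1, e2]
        split_ifs <;> ring
      have hhb0 : 0 < bhat b c 0 := by
        unfold bhat
        norm_num
        exact hb1
      have hhHD : ∀ k : ℕ, 1 ≤ k → k ≤ m → 0 < HD (bhat b c) k := by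
        intro k h1 h2
        have h3 := hHD (k + 1) (by omega) (by omega)
        rw [HD_succ_eq b c hneg hc k] at h3
        by_contra hX
        push_neg at hX
        have : b 1 * HD (bhat b c) k ≤ 0 := mul_nonpos_of_nonneg_of_nonpos hb1.le hX
        linarith
      have IH := ih (bhat b c) hhneg hhupper hhb0 hhHD u hu
      rcases Nat.even_or_odd m with hme | hmo
      · -- m even, so m+1 odd
        have hP1 : 0 < Pm b (m + 1) u := by
          have he := Pm_bhat_even b c hneg m (Nat.even_iff.mp hme) u
          rw [← he]
          exact IH.1
        have hP2 : 0 < Pm b m u := by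
          rcases Nat.eq_zero_or_pos m with h0 | h0
          · rw [h0, Pm_zero]; exact hb0
          · have hm2 : 2 ≤ m := by
              have := Nat.even_iff.mp hme; omega
            have ho := Pm_bhat_odd b c hneg (m - 1) (by have := Nat.even_iff.mp hme; omega) u
            rw [show m - 1 + 1 = m by omega, show m - 1 + 2 = m + 1 by omega] at ho
            have : Pm b m u = Pm (bhat b c) (m - 1) u + c * Pm b (m + 1) u := by
              rw [ho]; ring
            rw [this]
            exact add_pos (IH.2 (by omega)) (mul_pos hcpos hP1)
        exact ⟨by simpa using hP1, fun _ => by simpa using hP2⟩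
      · -- m odd
        have hm1 : 1 ≤ m := by have := Nat.odd_iff.mp hmo; omega
        have hP2 : 0 < Pm b m u := by
          have he := Pm_bhat_even b c hneg (m - 1) (by have := Nat.odd_iff.mp hmo; omega) u
          rw [show m - 1 + 1 = m by omega] at he
          rw [← he]
          exact IH.2 hm1
        have hP1 : 0 < Pm b (m + 1) u := by
          have ho := Pm_bhat_odd b c hneg m (Nat.odd_iff.mp hmo) u
          have hshift := Pm_shift b hneg m u
          have hm2 : b ((m : ℤ) + 2) = 0 := hupper _ (by push_cast; omega)
          rw [hshift, hm2, zero_add] at ho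
          have : Pm b (m + 1) u = Pm (bhat b c) m u + c * (u * Pm b m u) := by
            rw [ho]; ring
          rw [this]
          exact add_pos_of_pos_of_nonneg IH.1
            (mul_nonneg hcpos.le (mul_nonneg hu hP2.le))
        exact ⟨by simpa using hP1, fun _ => by simpa using hP2⟩








noncomputable def lprod (l : List ℝ) : Polynomial ℝ := (l.map (fun a => X + C a)).prod

lemma lprod_nil : lprod [] = 1 := by simp [lprod]

lemma lprod_cons (a : ℝ) (l : List ℝ) : lprod (a :: l) = (X + C a) * lprod l := by
  simp [lprod]

lemma lprod_monic (l : List ℝ) : (lprod l).Monic := by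
  induction l with
  | nil => rw [lprod_nil]; exact monic_one
  | cons a l ih => rw [lprod_cons]; exact (monic_X_add_C a).mul ih

lemma lprod_natDegree (l : List ℝ) : (lprod l).natDegree = l.length := by
  induction l with
  | nil => rw [lprod_nil]; simp
  | cons a l ih =>
      rw [lprod_cons, (monic_X_add_C a).natDegree_mul (lprod_monic l), natDegree_X_add_C, ih,
        List.length_cons]
      omega

lemma esymmSeq_eq_coeff (l : List ℝ) : ∀ t : ℕ, t ≤ l.length →
    esymmSeq l (t : ℤ) = (lprod l).coeff (l.length - t) := by
  induction l with
  | nil =>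
      intro t ht
      simp only [List.length_nil, Nat.le_zero] at ht
      subst ht
      simp [esymmSeq, lprod_nil]
  | cons a l ih =>
      intro t ht
      simp only [List.length_cons] at ht ⊢
      rcases Nat.eq_zero_or_pos t with rfl | ht1
      · rw [Nat.cast_zero, esymmSeq_zero, Nat.sub_zero, ← List.length_cons (a := a) (as := l), ← lprod_natDegree (a :: l),
          (lprod_monic (a :: l)).coeff_natDegree]
      · have hunfold : esymmSeq (a :: l) (t : ℤ)
            = esymmSeq l (t : ℤ) + a * esymmSeq l ((t - 1 : ℕ) : ℤ) := by
          show esymmSeq l _ + a * esymmSeq l _ = _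
          rw [show ((t : ℤ) - 1) = ((t - 1 : ℕ) : ℤ) by omega]
        rw [hunfold, lprod_cons]
        rcases eq_or_lt_of_le ht with h1 | h1
        · -- t = l.length + 1
          rw [esymmSeq_gt l (t : ℤ) (by omega), zero_add,
            ih (t - 1) (by omega), show l.length - (t - 1) = 0 by omega,
            show l.length + 1 - t = 0 by omega, Polynomial.mul_coeff_zero]
          simp
        · -- t ≤ l.length
          have ht2 : t ≤ l.length := by omega
          rw [add_mul, Polynomial.coeff_add, Polynomial.coeff_C_mul,
            show l.length + 1 - t = (l.length - t) + 1 by omega, Polynomial.coeff_X_mul,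
            ih t ht2, ih (t - 1) (by omega), show l.length - (t - 1) = l.length - t + 1 by omega]
  -- done

noncomputable def twist (b : ℤ → ℝ) : ℤ → ℝ := fun t => if t % 2 = 0 then b t else -b t

lemma twist_twist (b : ℤ → ℝ) (t : ℤ) : twist (twist b) t = b t := by
  unfold twist
  split_ifs <;> simp

lemma esymmSeq_map_neg (l : List ℝ) : ∀ t : ℤ,
    esymmSeq (l.map (fun a => -a)) t = twist (esymmSeq l) t := by
  induction l with
  | nil =>
      intro t
      unfold twist
      by_cases ht : t = 0
      · subst ht; simp [esymmSeq]
      · simp only [List.map_nil, esymmSeq, if_neg ht]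
        split_ifs <;> ring
  | cons a l ih =>
      intro t
      simp only [List.map_cons, esymmSeq, ih t, ih (t - 1)]
      unfold twist
      by_cases hp : t % 2 = 0
      · rw [if_pos hp, if_neg (by omega), if_pos hp]; ring
      · rw [if_neg hp, if_pos (by omega), if_neg hp]; ring

lemma prod_sign (k : ℕ) :
    (∏ i : Fin k, (if (i : ℕ) % 2 = 0 then (-1 : ℝ) else 1)) = (-1 : ℝ) ^ ((k + 1) / 2) := by
  induction k with
  | zero => simp
  | succ k ih =>
      rw [Fin.prod_univ_castSucc]
      simp only [Fin.coe_castSucc, Fin.val_last]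
      rw [ih]
      by_cases hk : k % 2 = 0
      · rw [if_pos hk, show (k + 1 + 1) / 2 = (k + 1) / 2 + 1 by omega, pow_succ]
      · rw [if_neg hk, mul_one, show (k + 1 + 1) / 2 = (k + 1) / 2 by omega]

lemma HD_twist (b : ℤ → ℝ) (k : ℕ) :
    HD (twist b) k = (-1 : ℝ) ^ ((k + 1) / 2) * HD b k := by
  unfold HD
  have hM : (Matrix.of fun i j : Fin k => twist b (2 * (j : ℤ) - (i : ℤ) + 1))
      = Matrix.of fun i j : Fin k =>
          (if (i : ℕ) % 2 = 0 then (-1 : ℝ) else 1) * b (2 * (j : ℤ) - (i : ℤ) + 1) := by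
    ext i j
    show twist b _ = _
    simp only [Matrix.of_apply]
    unfold twist
    have hcast : ((i : ℕ) : ℤ) % 2 = ((i : ℕ) % 2 : ℕ) := by push_cast; omega
    by_cases hp : (i : ℕ) % 2 = 0
    · rw [if_neg (by omega), if_pos hp]; ring
    · rw [if_pos (by omega), if_neg hp]; ring
  rw [hM]
  have hdm := Matrix.det_mul_column (fun i : Fin k => if (i : ℕ) % 2 = 0 then (-1 : ℝ) else 1)
    (Matrix.of fun i j : Fin k => b (2 * (j : ℤ) - (i : ℤ) + 1))
  rw [prod_sign] at hdm
  exact hdm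

lemma eval_split : ∀ m : ℕ, 1 ≤ m → ∀ (b : ℤ → ℝ), (∀ t : ℤ, t < 0 → b t = 0) → ∀ x : ℝ,
    (∑ j ∈ Finset.range (m + 1), b ((m : ℤ) - j) * x ^ j)
      = Pm b m (x ^ 2) + x * Pm b (m - 1) (x ^ 2) := by
  intro m
  induction m with
  | zero => omega
  | succ m ih =>
      intro _ b hneg x
      simp only [Nat.add_sub_cancel]
      rcases Nat.eq_zero_or_pos m with rfl | hm
      · rw [Pm_one b hneg, Pm_zero, Finset.sum_range_succ, Finset.sum_range_one]
        push_cast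
        norm_num
        ring
      · have hpeel : (∑ j ∈ Finset.range (m + 2), b (((m + 1 : ℕ) : ℤ) - j) * x ^ j)
            = b ((m : ℤ) + 1) + x * ∑ j ∈ Finset.range (m + 1), b ((m : ℤ) - j) * x ^ j := by
          rw [Finset.sum_range_succ']
          have hsum : ∀ j ∈ Finset.range (m + 1),
              b (((m + 1 : ℕ) : ℤ) - ((j + 1 : ℕ) : ℤ)) * x ^ (j + 1)
                = x * (b ((m : ℤ) - j) * x ^ j) := by
            intro j _
            rw [show (((m + 1 : ℕ) : ℤ) - ((j + 1 : ℕ) : ℤ)) = ((m : ℤ) - j) by push_cast; ring,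
              pow_succ]
            ring
          rw [Finset.sum_congr rfl hsum, ← Finset.mul_sum]
          have hconst : b (((m + 1 : ℕ) : ℤ) - ((0 : ℕ) : ℤ)) * x ^ (0 : ℕ) = b ((m : ℤ) + 1) := by
            norm_num
          rw [hconst, add_comm]
        rw [hpeel, ih hm b hneg x]
        have hs := Pm_shift b hneg (m - 1) (x ^ 2)
        rw [show m - 1 + 2 = m + 1 by omega,
          show ((m - 1 : ℕ) : ℤ) + 2 = ((m + 1 : ℕ) : ℤ) by omega] at hs
        rw [hs]
        push_cast
        ring



lemma charpoly_conj {n : Type*} [Fintype n] [DecidableEq n] (M V W : Matrix n n ℂ)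
    (hVW : V * W = 1) : (V * M * W).charpoly = M.charpoly := by
  have hscal : ∀ A : Matrix n n ℂ[X],
      A * Matrix.scalar n (X : ℂ[X]) = Matrix.scalar n (X : ℂ[X]) * A :=
    fun A => ((Matrix.scalar_commute (X : ℂ[X]) (fun r => Commute.all _ r) A).eq).symm
  have hcm : Matrix.charmatrix (V * M * W)
      = (C : ℂ →+* ℂ[X]).mapMatrix V * Matrix.charmatrix M * (C : ℂ →+* ℂ[X]).mapMatrix W := by
    unfold Matrix.charmatrix
    rw [Matrix.mul_sub, Matrix.sub_mul]
    congr 1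
    · rw [hscal ((C : ℂ →+* ℂ[X]).mapMatrix V), Matrix.mul_assoc,
        ← _root_.map_mul ((C : ℂ →+* ℂ[X]).mapMatrix) V W, hVW, _root_.map_one, Matrix.mul_one]
    · rw [_root_.map_mul ((C : ℂ →+* ℂ[X]).mapMatrix) (V * M) W,
        _root_.map_mul ((C : ℂ →+* ℂ[X]).mapMatrix) V M]
  unfold Matrix.charpoly
  rw [hcm, Matrix.det_mul, Matrix.det_mul]
  have hdet : ((C : ℂ →+* ℂ[X]).mapMatrix V).det * ((C : ℂ →+* ℂ[X]).mapMatrix W).det = 1 := by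
    rw [← Matrix.det_mul, ← _root_.map_mul ((C : ℂ →+* ℂ[X]).mapMatrix) V W, hVW, _root_.map_one,
      Matrix.det_one]
  calc ((C : ℂ →+* ℂ[X]).mapMatrix V).det * (Matrix.charmatrix M).det
        * ((C : ℂ →+* ℂ[X]).mapMatrix W).det
      = (((C : ℂ →+* ℂ[X]).mapMatrix V).det * ((C : ℂ →+* ℂ[X]).mapMatrix W).det)
          * (Matrix.charmatrix M).det := by ring
    _ = (Matrix.charmatrix M).det := by rw [hdet, one_mul]

lemma charpoly_diagonal {n : Type*} [Fintype n] [DecidableEq n] (d : n → ℂ) :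
    (Matrix.diagonal d).charpoly = ∏ i, (X - C (d i)) := by
  unfold Matrix.charpoly
  have h : Matrix.charmatrix (Matrix.diagonal d) = Matrix.diagonal (fun i => X - C (d i)) := by
    refine Matrix.ext fun i j => ?_
    by_cases hij : i = j
    · subst hij
      rw [Matrix.diagonal_apply_eq, Matrix.charmatrix_apply_eq, Matrix.diagonal_apply_eq]
    · rw [Matrix.charmatrix_apply_ne _ _ _ hij, Matrix.diagonal_apply_ne _ hij,
        Matrix.diagonal_apply_ne _ hij, map_zero, neg_zero]
  rw [h, Matrix.det_diagonal]

lemma charpoly_hermitian {n : ℕ} (A : Matrix (Fin n) (Fin n) ℂ) (hA : A.IsHermitian) :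
    A.charpoly = ∏ i, (X - C ((hA.eigenvalues i : ℝ) : ℂ)) := by
  have hst := hA.spectral_theorem
  set U := (hA.eigenvectorUnitary : Matrix (Fin n) (Fin n) ℂ) with hU
  have hUW : U * star U = 1 := (Matrix.mem_unitaryGroup_iff).mp hA.eigenvectorUnitary.2
  calc A.charpoly
      = (U * Matrix.diagonal (RCLike.ofReal ∘ hA.eigenvalues) * star U).charpoly := by
        conv_lhs => rw [hst, Unitary.conjStarAlgAut_apply]
    _ = (Matrix.diagonal (RCLike.ofReal ∘ hA.eigenvalues)).charpoly :=
        charpoly_conj _ U (star U) hUW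
    _ = ∏ i, (X - C ((hA.eigenvalues i : ℝ) : ℂ)) := by
        rw [charpoly_diagonal]
        rfl

lemma HD_esymm_pos (l : List ℝ) (hl : ∀ x ∈ l, 0 < x) (k : ℕ) (h2 : k ≤ l.length) :
    0 < HD (esymmSeq l) k := by
  have heq : HD (esymmSeq l) k = (EMat l (fun i : Fin k => (i : ℤ) + 1)).det := by
    unfold HD EMat
    congr 1
    ext i j
    simp only [Matrix.of_apply]
    congr 1
    ring
  rw [heq]
  refine EMat_det_pos l hl _ ?_ ?_ ?_
  · intro a b hab
    have h : (a : ℕ) < (b : ℕ) := hab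
    dsimp only
    omega
  · intro i; try dsimp only
    omega
  · intro i
    have h3 : (i : ℕ) < k := i.isLt
    try dsimp only
    omega


end HurwitzAux

open HurwitzAux Polynomial Matrix Finset in
/-- **Characterization of positive operators.** -/

theorem posSemidef_iff_hurwitz
    (n n₀ : ℕ) (A : Matrix (Fin n) (Fin n) ℂ) (hA : A.IsHermitian)
    (q : Polynomial ℝ) (hq : q.map (algebraMap ℝ ℂ) = A.charpoly)
    (hmult : q.rootMultiplicity 0 = n₀) :
    (∀ x : Fin n → ℂ, 0 ≤ dotProduct (star x) (A.mulVec x)) ↔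
      (∀ k : ℕ, 1 ≤ k → k ≤ n - n₀ →
        0 < (-1 : ℝ) ^ ((k + 1) / 2) * hurwitzDet q k) := by
  classical
  set μ : Fin n → ℝ := hA.eigenvalues with hμdef
  have hq' : q = ∏ i, (X - C (μ i)) := by
    apply Polynomial.map_injective (algebraMap ℝ ℂ) (algebraMap ℝ ℂ).injective
    rw [hq, charpoly_hermitian A hA, Polynomial.map_prod]
    refine Finset.prod_congr rfl fun i _ => ?_
    rw [Polynomial.map_sub, Polynomial.map_X, Polynomial.map_C]
    norm_num
    rfl
  have hdegq : q.natDegree = n := by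
    rw [hq', Polynomial.natDegree_prod _ _ (fun i _ => X_sub_C_ne_zero (μ i))]
    simp
  have hn₀ : n₀ = (univ.filter (fun i => μ i = 0)).card := by
    have hroots : q.roots = Multiset.map μ univ.val := by
      have h1 : q = (Multiset.map (fun a => X - C a) (Multiset.map μ univ.val)).prod := by
        rw [hq', Finset.prod_eq_multiset_prod, Multiset.map_map]
        rfl
      rw [h1, Polynomial.roots_multiset_prod_X_sub_C]
    rw [← hmult, ← Polynomial.count_roots, hroots, Multiset.count_map]
    have : Multiset.filter (fun i => (0:ℝ) = μ i) univ.val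
        = Multiset.filter (fun i => μ i = 0) univ.val := by
      apply Multiset.filter_congr
      intro i _
      exact eq_comm
    rw [this]
    rfl
  have hn₀n : n₀ ≤ n := by
    rw [hn₀]
    calc (univ.filter (fun i => μ i = 0)).card ≤ (univ : Finset (Fin n)).card :=
          Finset.card_filter_le _ _
      _ = n := by simp
  set sne : Finset (Fin n) := univ.filter (fun i => ¬ μ i = 0) with hsne
  have hmcard : sne.card = n - n₀ := by
    have h := Finset.card_filter_add_card_filter_not
      (s := (univ : Finset (Fin n))) (p := fun i => μ i = 0)
    have hcu : (univ : Finset (Fin n)).card = n := by simp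
    rw [hsne]
    omega
  set lE : List ℝ := sne.toList.map μ with hlEdef
  have hlen : lE.length = n - n₀ := by
    rw [hlEdef, List.length_map, Finset.length_toList, hmcard]
  have hsplit : q = X ^ n₀ * lprod (lE.map (fun a => -a)) := by
    rw [hq', ← Finset.prod_filter_mul_prod_filter_not univ (fun i => μ i = 0)
      (fun i => X - C (μ i))]
    congr 1
    · calc ∏ i ∈ univ.filter (fun i => μ i = 0), (X - C (μ i))
          = ∏ _i ∈ univ.filter (fun i => μ i = 0), (X : ℝ[X]) := by
            refine Finset.prod_congr rfl fun i hi => ?_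
            rw [(Finset.mem_filter.mp hi).2]
            simp
        _ = X ^ n₀ := by rw [Finset.prod_const, hn₀]
    · have h1 : lprod (lE.map (fun a => -a)) = (lE.map (fun a => X - C a)).prod := by
        unfold lprod
        rw [List.map_map]
        congr 1
        refine List.map_congr_left fun a _ => ?_
        simp only [Function.comp_apply, map_neg]
        ring
      rw [h1, hlEdef, List.map_map]
      rw [show ((fun a => X - C a) ∘ μ) = fun i => X - C (μ i) from rfl]
      exact (Finset.prod_map_toList sne (fun i => X - C (μ i))).symm
  set b0 : ℤ → ℝ := fun t => if 0 ≤ t ∧ t ≤ (n : ℤ) then q.coeff (n - t.toNat) else 0 with hb0def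
  have hb0e : ∀ t : ℤ, b0 t = esymmSeq (lE.map (fun a => -a)) t := by
    intro t
    set lEn : List ℝ := lE.map (fun a => -a) with hlEn
    have hlenn : lEn.length = n - n₀ := by rw [hlEn, List.length_map, hlen]
    show (if 0 ≤ t ∧ t ≤ (n : ℤ) then q.coeff (n - t.toNat) else 0) = esymmSeq lEn t
    by_cases h1 : 0 ≤ t ∧ t ≤ (n : ℤ)
    · rw [if_pos h1]
      have htt : (t.toNat : ℤ) = t := Int.toNat_of_nonneg h1.1
      have htn_le : t.toNat ≤ n := by omega
      rw [hsplit, show X ^ n₀ * lprod lEn = lprod lEn * X ^ n₀ by ring,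
        Polynomial.coeff_mul_X_pow']
      by_cases h2 : t.toNat ≤ n - n₀
      · rw [if_pos (by omega)]
        have h3 := esymmSeq_eq_coeff lEn t.toNat (by omega)
        rw [hlenn] at h3
        rw [show n - t.toNat - n₀ = n - n₀ - t.toNat by omega, ← h3, htt]
      · rw [if_neg (by omega)]
        exact (esymmSeq_gt lEn t (by rw [hlenn]; omega)).symm
    · rw [if_neg h1]
      rcases not_and_or.mp h1 with h2 | h2
      · push_neg at h2
        exact (esymmSeq_neg lEn t (by omega)).symm
      · push_neg at h2
        exact (esymmSeq_gt lEn t (by rw [hlenn]; push_cast; omega)).symm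
  have hkey : ∀ k : ℕ, (-1 : ℝ) ^ ((k + 1) / 2) * hurwitzDet q k = HD (esymmSeq lE) k := by
    intro k
    have h1 : hurwitzDet q k = HD b0 k := by
      unfold hurwitzDet HD
      rw [hdegq]
    have h4 : ∀ t : ℤ, b0 t = twist (esymmSeq lE) t := fun t => by
      rw [hb0e t, esymmSeq_map_neg lE t]
    have h5 : HD b0 k = HD (twist (esymmSeq lE)) k := by
      unfold HD
      congr 1
      ext i j
      simp only [Matrix.of_apply]
      rw [h4]
    rw [h1, h5, HD_twist]
    rw [← mul_assoc, ← pow_add]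
    have : Even ((k + 1) / 2 + (k + 1) / 2) := ⟨(k + 1) / 2, by ring⟩
    rw [this.neg_one_pow, one_mul]
  have hlmem : ∀ x ∈ lE, x ≠ 0 := by
    intro x hx
    rw [hlEdef] at hx
    obtain ⟨i, hi, rfl⟩ := List.mem_map.mp hx
    exact (Finset.mem_filter.mp (Finset.mem_toList.mp hi)).2
  constructor
  · -- forward
    intro hL k hk1 hk2
    have hpsd : A.PosSemidef := posSemidef_iff_dotProduct_mulVec.mpr ⟨hA, hL⟩
    have hev : ∀ i, 0 ≤ μ i := fun i => hpsd.eigenvalues_nonneg i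
    rw [hkey k]
    refine HD_esymm_pos lE ?_ k (by omega)
    intro x hx
    have hne := hlmem x hx
    rw [hlEdef] at hx
    obtain ⟨i, _, rfl⟩ := List.mem_map.mp hx
    exact lt_of_le_of_ne (hev i) (Ne.symm hne)
  · -- backward
    intro hR
    suffices hpsd : A.PosSemidef from fun x => (posSemidef_iff_dotProduct_mulVec.mp hpsd).2 x
    refine hA.posSemidef_iff_eigenvalues_nonneg.mpr fun i => ?_
    by_contra hbad
    push_neg at hbad
    have hbad' : μ i < 0 := hbad
    have hmem : μ i ∈ lE := by
      rw [hlEdef]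
      exact List.mem_map.mpr ⟨i, Finset.mem_toList.mpr
        (Finset.mem_filter.mpr ⟨Finset.mem_univ _, by intro h; simp [h] at hbad'⟩), rfl⟩
    set m := lE.length with hm
    have hm1 : 1 ≤ m := List.length_pos_iff.mpr (List.ne_nil_of_mem hmem)
    have hHDpos : ∀ k : ℕ, 1 ≤ k → k ≤ m → 0 < HD (esymmSeq lE) k := by
      intro k h1 h2
      rw [← hkey k]
      exact hR k h1 (by omega)
    set x : ℝ := -μ i with hx
    have hxpos : 0 < x := by rw [hx]; linarith [hbad']
    have hcore := backward_core m (esymmSeq lE) (esymmSeq_neg lE)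
      (fun t ht => esymmSeq_gt lE t ht) (by rw [esymmSeq_zero]; norm_num)
      hHDpos (x ^ 2) (sq_nonneg x)
    have hevalzero : (lprod lE).eval x = 0 := by
      unfold lprod
      rw [Polynomial.eval_list_prod]
      refine List.prod_eq_zero ?_
      rw [List.map_map]
      refine List.mem_map.mpr ⟨μ i, hmem, ?_⟩
      simp only [Function.comp_apply]
      rw [Polynomial.eval_add, Polynomial.eval_X, Polynomial.eval_C, hx]
      ring
    have hevalpos : 0 < (lprod lE).eval x := by
      rw [Polynomial.eval_eq_sum_range, lprod_natDegree]
      have hco : ∀ j ∈ Finset.range (m + 1), (lprod lE).coeff j * x ^ j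
          = esymmSeq lE ((m : ℤ) - j) * x ^ j := by
        intro j hj
        rw [Finset.mem_range] at hj
        have h6 := esymmSeq_eq_coeff lE (m - j) (by omega)
        rw [show m - (m - j) = j by omega] at h6
        rw [← h6, show ((m - j : ℕ) : ℤ) = (m : ℤ) - j by omega]
      rw [Finset.sum_congr rfl hco, eval_split m hm1 (esymmSeq lE) (esymmSeq_neg lE) x]
      exact add_pos_of_pos_of_nonneg hcore.1
        (mul_nonneg hxpos.le (hcore.2 hm1).le)
    rw [hevalzero] at hevalpos
    exact absurd hevalpos (lt_irrefl 0)
end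

section
/- Let A be a 3×3 Hermitian complex matrix with det(A) ≠ 0, and write t = tr(A), s = tr(A²), d = det(A), all real numbers. Then A is positive semidefinite if and only if the following three conditions hold: t > 0, and (1/2)·t·(t² − s) − d > 0, and ( (1/2)·t·(t² − s) − d )·d > 0. -/
open ComplexOrder

lemma aux_three_reals (a b c : ℝ) (hne : a * b * c ≠ 0) :
    (0 ≤ a ∧ 0 ≤ b ∧ 0 ≤ c) ↔
      (0 < a + b + c ∧
        0 < (1/2) * (a+b+c) * ((a+b+c)^2 - (a^2+b^2+c^2)) - a*b*c ∧
        0 < ((1/2) * (a+b+c) * ((a+b+c)^2 - (a^2+b^2+c^2)) - a*b*c) * (a*b*c)) := by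
  have hmid : (1/2) * (a+b+c) * ((a+b+c)^2 - (a^2+b^2+c^2)) - a*b*c = (a+b)*(b+c)*(c+a) := by
    ring
  rw [hmid]
  constructor
  · rintro ⟨ha, hb, hc⟩
    have ha' : 0 < a := ha.lt_of_ne (by rintro rfl; simp at hne)
    have hb' : 0 < b := hb.lt_of_ne (by rintro rfl; simp at hne)
    have hc' : 0 < c := hc.lt_of_ne (by rintro rfl; simp at hne)
    refine ⟨by linarith, by positivity, by positivity⟩
  · rintro ⟨h1, h2, h3⟩
    have hd : 0 < a * b * c := by
      rcases mul_pos_iff.mp h3 with ⟨_, h⟩ | ⟨h2', _⟩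
      · exact h
      · linarith
    have he2 : 0 < a*b + b*c + c*a := by
      by_contra h; push_neg at h
      nlinarith [mul_nonpos_of_nonneg_of_nonpos h1.le h]
    refine ⟨?_, ?_, ?_⟩
    · by_contra h; push_neg at h
      have hbc : b * c < 0 := by
        by_contra h'; push_neg at h'
        nlinarith [mul_nonpos_of_nonpos_of_nonneg h.le h']
      nlinarith [mul_neg_of_neg_of_pos h (show 0 < b + c by linarith)]
    · by_contra h; push_neg at h
      have hbc : a * c < 0 := by
        by_contra h'; push_neg at h'
        nlinarith [mul_nonpos_of_nonpos_of_nonneg h.le h']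
      nlinarith [mul_neg_of_neg_of_pos h (show 0 < a + c by linarith)]
    · by_contra h; push_neg at h
      have hbc : a * b < 0 := by
        by_contra h'; push_neg at h'
        nlinarith [mul_nonpos_of_nonpos_of_nonneg h.le h']
      nlinarith [mul_neg_of_neg_of_pos h (show 0 < a + b by linarith)]

/-- A `3 × 3` Hermitian complex matrix `A` with `det A ≠ 0`, writing
`t = tr A`, `s = tr A²`, `d = det A` (all real), is positive semidefinite iff
`t > 0`, `(1/2) t (t² - s) - d > 0` and `((1/2) t (t² - s) - d) d > 0`. -/
theorem posSemidef_three_dim_iff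
    (A : Matrix (Fin 3) (Fin 3) ℂ) (hA : A.IsHermitian)
    (t s d : ℝ) (ht : (t : ℂ) = A.trace) (hs : (s : ℂ) = (A ^ 2).trace)
    (hd : (d : ℂ) = A.det) (hdet : d ≠ 0) :
    (∀ x : Fin 3 → ℂ, 0 ≤ dotProduct (star x) (A.mulVec x)) ↔
      (0 < t ∧
        0 < (1 / 2) * t * (t ^ 2 - s) - d ∧
        0 < ((1 / 2) * t * (t ^ 2 - s) - d) * d) := by
  classical
  set ev : Fin 3 → ℝ := hA.eigenvalues with hev
  have h1 : star (hA.eigenvectorUnitary : Matrix (Fin 3) (Fin 3) ℂ) *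
      (hA.eigenvectorUnitary : Matrix (Fin 3) (Fin 3) ℂ) = 1 :=
    Unitary.coe_star_mul_self _
  have key : ∀ (U D : Matrix (Fin 3) (Fin 3) ℂ), star U * U = 1 →
      (U * D * star U) * (U * D * star U) = U * (D * D) * star U := by
    intro U D h
    simp only [Matrix.mul_assoc]
    rw [← Matrix.mul_assoc (star U) U, h, Matrix.one_mul]
  have htr : A.trace = ∑ i, (ev i : ℂ) := by
    conv_lhs => rw [hA.spectral_theorem, Unitary.conjStarAlgAut_apply]
    rw [Matrix.trace_mul_cycle, h1, Matrix.one_mul, Matrix.trace_diagonal]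
    rfl
  have htr2 : (A ^ 2).trace = ∑ i, ((ev i : ℂ)) ^ 2 := by
    conv_lhs => rw [pow_two, hA.spectral_theorem, Unitary.conjStarAlgAut_apply, key _ _ h1]
    rw [Matrix.trace_mul_cycle, h1, Matrix.one_mul, Matrix.diagonal_mul_diagonal,
      Matrix.trace_diagonal]
    simp [pow_two, hev]
  have hdet' : A.det = ∏ i, (ev i : ℂ) := hA.det_eq_prod_eigenvalues
  have hts : t = ev 0 + ev 1 + ev 2 := by
    have : (t : ℂ) = ((ev 0 + ev 1 + ev 2 : ℝ) : ℂ) := by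
      rw [ht, htr, Fin.sum_univ_three]; push_cast; ring
    exact_mod_cast this
  have hss : s = (ev 0)^2 + (ev 1)^2 + (ev 2)^2 := by
    have : (s : ℂ) = (((ev 0)^2 + (ev 1)^2 + (ev 2)^2 : ℝ) : ℂ) := by
      rw [hs, htr2, Fin.sum_univ_three]; push_cast; ring
    exact_mod_cast this
  have hds : d = ev 0 * ev 1 * ev 2 := by
    have : (d : ℂ) = ((ev 0 * ev 1 * ev 2 : ℝ) : ℂ) := by
      rw [hd, hdet', Fin.prod_univ_three]; push_cast; ring
    exact_mod_cast this
  have hlhs : (∀ x : Fin 3 → ℂ, 0 ≤ dotProduct (star x) (A.mulVec x)) ↔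
      (0 ≤ ev 0 ∧ 0 ≤ ev 1 ∧ 0 ≤ ev 2) := by
    constructor
    · intro h
      have hpsd : A.PosSemidef := Matrix.PosSemidef.of_dotProduct_mulVec_nonneg hA h
      exact ⟨hpsd.eigenvalues_nonneg 0, hpsd.eigenvalues_nonneg 1, hpsd.eigenvalues_nonneg 2⟩
    · rintro ⟨h0, h1', h2⟩
      have : ∀ i, 0 ≤ ev i := by
        intro i; fin_cases i <;> assumption
      exact (hA.posSemidef_iff_eigenvalues_nonneg.mpr this).dotProduct_mulVec_nonneg
  rw [hlhs, hts, hss, hds]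
  have hne : ev 0 * ev 1 * ev 2 ≠ 0 := by rw [← hds]; exact hdet
  exact aux_three_reals (ev 0) (ev 1) (ev 2) hne
end
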